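/- arXiv:2407.10158 — 3 statements merged into one kernel-verified Lean document; each statement's English description precedes it below -/
import Mathlib

section
/- Let m, n be positive integers and h a norm on ℝ^m with generated norm H on ℝ^{m×n}. For every finite ℝ^{m×n}-valued Borel measure F on ℝ^n, the h-mass of F in the sense of Federer–Fleming equals the total variation of F with respect to H: sup { ∫ ω : dF : ω ∈ C_c^∞(ℝ^n; ℝ^{m×n}) with sup_{x ∈ ℝ^n} sup_{|u| ≤ 1} h_*(ω(x) u) ≤ 1 } = |F|_H, where ∫ ω : dF denotes the entrywise integral Σ_{i,j} ∫ ω_{ij} dF_{ij}. -/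
open MeasureTheory

noncomputable section

/-- `ℝ^n` with the Euclidean norm. -/
abbrev Euc (n : ℕ) := EuclideanSpace ℝ (Fin n)

/-- `h` is a norm on `ℝ^m`. -/
def IsNorm {m : ℕ} (h : (Fin m → ℝ) → ℝ) : Prop :=
  (∀ x y, h (x + y) ≤ h x + h y) ∧ (∀ (c : ℝ) (x), h (c • x) = |c| * h x) ∧
    ∀ x, h x = 0 → x = 0

/-- The dual norm `h_*` of `h`: `h_*(g) = sup { g·θ : h θ ≤ 1 }`. -/
def dualNorm {m : ℕ} (h : (Fin m → ℝ) → ℝ) (g : Fin m → ℝ) : ℝ :=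
  sSup {r | ∃ θ : Fin m → ℝ, h θ ≤ 1 ∧ r = ∑ i, g i * θ i}

/-- Matrix-vector product `M u`. -/
def matVec {m n : ℕ} (M : Fin m → Fin n → ℝ) (u : Euc n) : Fin m → ℝ :=
  fun i => ∑ j, M i j * u j

/-- Frobenius inner product `M : N`. -/
def frob {m n : ℕ} (M N : Fin m → Fin n → ℝ) : ℝ := ∑ i, ∑ j, M i j * N i j

/-- `M ∈ ∂H(0)`, i.e. `h_*(M u) ≤ 1` for all `|u| ≤ 1`. -/
def inSubdiffH {m n : ℕ} (h : (Fin m → ℝ) → ℝ) (M : Fin m → Fin n → ℝ) : Prop :=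
  ∀ u : Euc n, ‖u‖ ≤ 1 → dualNorm h (matVec M u) ≤ 1

/-- The norm `H` on `ℝ^{m×n}` generated by `h`:
`H(N) = sup { M:N : M ∈ ∂H(0) }`. -/
def genNorm {m n : ℕ} (h : (Fin m → ℝ) → ℝ) (N : Fin m → Fin n → ℝ) : ℝ :=
  sSup {r | ∃ M : Fin m → Fin n → ℝ, inSubdiffH h M ∧ r = frob M N}

/-- The rank-one matrix `θ ⊗ e`. -/
def outer {m n : ℕ} (θ : Fin m → ℝ) (e : Euc n) : Fin m → Fin n → ℝ :=
  fun i j => θ i * e j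

/-- An `ℝ^{m×n}`-valued Borel measure on `ℝ^n`, given by its component signed measures. -/
abbrev MatMeas (m n : ℕ) := Fin m → Fin n → MeasureTheory.SignedMeasure (Euc n)

/-- An `ℝ^m`-valued Borel measure on `ℝ^n`, given by its component signed measures. -/
abbrev VecMeas (m n : ℕ) := Fin m → MeasureTheory.SignedMeasure (Euc n)

/-- Integral of a function against a signed measure (via the Jordan decomposition). -/
def sInt {n : ℕ} (ν : MeasureTheory.SignedMeasure (Euc n)) (f : Euc n → ℝ) : ℝ :=
  ∫ x, f x ∂ν.toJordanDecomposition.posPart - ∫ x, f x ∂ν.toJordanDecomposition.negPart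

/-- The total variation `|F|_H` of `F` with respect to the norm `H` generated by `h`:
the supremum of `Σ_k H(F(B_k))` over countable Borel partitions `(B_k)` of `ℝ^n`. -/
def tvH {m n : ℕ} (h : (Fin m → ℝ) → ℝ) (F : MatMeas m n) : ℝ :=
  sSup {r | ∃ B : ℕ → Set (Euc n), (∀ k, MeasurableSet (B k)) ∧
    Pairwise (Function.onFun Disjoint B) ∧ (⋃ k, B k) = Set.univ ∧
    r = ∑' k, genNorm h (fun i j => F i j (B k))}

/-- `F` is supported in `K`: it vanishes on Borel sets disjoint from `K`. -/
def suppIn {m n : ℕ} (F : MatMeas m n) (K : Set (Euc n)) : Prop :=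
  ∀ B : Set (Euc n), MeasurableSet B → Disjoint B K → ∀ i j, F i j B = 0

/-- `F` is compactly supported. -/
def suppInCpt {m n : ℕ} (F : MatMeas m n) : Prop :=
  ∃ K : Set (Euc n), IsCompact K ∧ suppIn F K

/-- `F₀` is compactly supported. -/
def vSuppInCpt {m n : ℕ} (F0 : VecMeas m n) : Prop :=
  ∃ K : Set (Euc n), IsCompact K ∧
    ∀ B : Set (Euc n), MeasurableSet B → Disjoint B K → ∀ i, F0 i B = 0

/-- The Jacobian matrix `Dψ(x) ∈ ℝ^{m×n}` of `ψ : ℝ^n → ℝ^m`. -/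
def jac {m n : ℕ} (ψ : Euc n → (Fin m → ℝ)) (x : Euc n) : Fin m → Fin n → ℝ :=
  fun i j => fderiv ℝ ψ x (EuclideanSpace.single j 1) i

/-- `∂F = F₀`, i.e. `∫ Dψ : dF = ∫ ψ · dF₀` for all smooth compactly supported `ψ`. -/
def isBoundary {m n : ℕ} (F : MatMeas m n) (F0 : VecMeas m n) : Prop :=
  ∀ ψ : Euc n → (Fin m → ℝ), ContDiff ℝ (⊤ : ℕ∞) ψ → HasCompactSupport ψ →
    (∑ i, ∑ j, sInt (F i j) fun x => jac ψ x i j) = ∑ i, sInt (F0 i) fun x => ψ x i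

/-- `φ` is an admissible dual potential: `h_*(φ(y) - φ(x)) ≤ |y - x|`. -/
def admissible {m n : ℕ} (h : (Fin m → ℝ) → ℝ) (φ : Euc n → Fin m → ℝ) : Prop :=
  ∀ x y : Euc n, dualNorm h (φ y - φ x) ≤ ‖y - x‖

/-- The dual objective `∫ φ · dF₀`. -/
def intDual {m n : ℕ} (F0 : VecMeas m n) (φ : Euc n → Fin m → ℝ) : ℝ :=
  ∑ i, sInt (F0 i) fun x => φ x i

namespace S8
open Metric Function Set
open scoped ENNReal

variable {m n : ℕ} {h : (Fin m → ℝ) → ℝ}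

/-! ### Basic facts about the norm `h` -/

lemma h_zero (hh : IsNorm h) : h 0 = 0 := by
  have := hh.2.1 0 0; simpa using this

lemma h_neg (hh : IsNorm h) (x : Fin m → ℝ) : h (-x) = h x := by
  have := hh.2.1 (-1) x; simpa using this

lemma h_nonneg (hh : IsNorm h) (x : Fin m → ℝ) : 0 ≤ h x := by
  have h1 := hh.1 x (-x)
  rw [add_neg_cancel, h_zero hh, h_neg hh] at h1
  linarith

lemma h_pos (hh : IsNorm h) {x : Fin m → ℝ} (hx : x ≠ 0) : 0 < h x :=
  lt_of_le_of_ne (h_nonneg hh x) fun e => hx (hh.2.2 x e.symm)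

lemma h_sum_le (hh : IsNorm h) {ι : Type*} (s : Finset ι) (f : ι → Fin m → ℝ) :
    h (∑ i ∈ s, f i) ≤ ∑ i ∈ s, h (f i) := by
  classical
  induction s using Finset.induction with
  | empty => simp [h_zero hh]
  | insert _ _ hi ih =>
    rw [Finset.sum_insert hi, Finset.sum_insert hi]
    exact le_trans (hh.1 _ _) (by linarith)

/-- The constant `C₁ = ∑ h(e_i)`. -/
def hC (h : (Fin m → ℝ) → ℝ) : ℝ := ∑ i, h (Pi.single i 1)

lemma hC_nonneg (hh : IsNorm h) : 0 ≤ hC h :=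
  Finset.sum_nonneg fun i _ => h_nonneg hh _

lemma h_le (hh : IsNorm h) (x : Fin m → ℝ) : h x ≤ hC h * ‖x‖ := by
  set e : Fin m → Fin m → ℝ := fun i => Pi.single i 1 with he
  have hx : x = ∑ i, (x i) • e i := by
    ext j
    simp [he, Finset.sum_apply, Pi.single_apply]
  calc h x = h (∑ i, (x i) • e i) := by rw [← hx]
    _ ≤ ∑ i, h ((x i) • e i) := h_sum_le hh _ _
    _ = ∑ i, |x i| * h (e i) := by simp [hh.2.1]
    _ ≤ ∑ i, ‖x‖ * h (e i) := by
        refine Finset.sum_le_sum fun i _ => ?_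
        exact mul_le_mul_of_nonneg_right (by
          simpa [Real.norm_eq_abs] using norm_le_pi_norm x i) (h_nonneg hh _)
    _ = hC h * ‖x‖ := by
        rw [hC, Finset.sum_mul]
        exact Finset.sum_congr rfl (fun i _ => mul_comm _ _)

lemma h_continuous (hh : IsNorm h) : Continuous h := by
  have : LipschitzWith (Real.toNNReal (hC h)) h := by
    apply LipschitzWith.of_dist_le_mul
    intro x y
    have h1 : h x - h y ≤ h (x - y) := by
      have := hh.1 (x - y) y; simpa using this
    have h2 : h y - h x ≤ h (x - y) := by
      have := hh.1 (y - x) x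
      rw [sub_add_cancel] at this
      have e : h (y - x) = h (x - y) := by rw [← h_neg hh (x - y)]; ring_nf
      linarith [this, e.le, e.ge]
    have h3 : dist (h x) (h y) ≤ h (x - y) := by
      rw [Real.dist_eq, abs_sub_le_iff]; exact ⟨h1, h2⟩
    calc dist (h x) (h y) ≤ h (x - y) := h3
      _ ≤ hC h * ‖x - y‖ := h_le hh _
      _ ≤ Real.toNNReal (hC h) * dist x y := by
          rw [dist_eq_norm]
          exact mul_le_mul_of_nonneg_right (Real.le_coe_toNNReal _) (norm_nonneg _)
  exact this.continuous

lemma h_lower (hh : IsNorm h) (hm : 0 < m) : ∃ c : ℝ, 0 < c ∧ ∀ x, c * ‖x‖ ≤ h x := by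
  have hS : IsCompact (Metric.sphere (0 : Fin m → ℝ) 1) := isCompact_sphere 0 1
  have hne : (Metric.sphere (0 : Fin m → ℝ) 1).Nonempty := by
    refine ⟨Pi.single ⟨0, hm⟩ 1, ?_⟩
    simp only [Metric.mem_sphere, dist_eq_norm, sub_zero]
    rw [Pi.norm_single]
    simp
  obtain ⟨x₀, hx₀, hmin⟩ := hS.exists_isMinOn hne (h_continuous hh).continuousOn
  have hx₀n : ‖x₀‖ = 1 := by simpa [dist_eq_norm] using hx₀
  have hx₀ne : x₀ ≠ 0 := by intro e; rw [e] at hx₀n; simp at hx₀n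
  refine ⟨h x₀, h_pos hh hx₀ne, fun x => ?_⟩
  rcases eq_or_ne x 0 with rfl | hx
  · simp [h_zero hh]
  · have hnx : (0:ℝ) < ‖x‖ := norm_pos_iff.2 hx
    have hmem : ‖x‖⁻¹ • x ∈ Metric.sphere (0 : Fin m → ℝ) 1 := by
      simp [dist_eq_norm, norm_smul, abs_inv, abs_of_pos hnx, inv_mul_cancel₀ hnx.ne']
    have hmm : h x₀ ≤ h (‖x‖⁻¹ • x) := hmin hmem
    have e : h (‖x‖⁻¹ • x) = ‖x‖⁻¹ * h x := by
      rw [hh.2.1, abs_inv, abs_of_pos hnx]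
    rw [e] at hmm
    calc h x₀ * ‖x‖ ≤ (‖x‖⁻¹ * h x) * ‖x‖ := mul_le_mul_of_nonneg_right hmm hnx.le
      _ = h x := by field_simp

/-! ### Facts about the dual norm -/

lemma dn_set_nonempty (hh : IsNorm h) (g : Fin m → ℝ) :
    {r | ∃ θ : Fin m → ℝ, h θ ≤ 1 ∧ r = ∑ i, g i * θ i}.Nonempty :=
  ⟨0, 0, by simp [h_zero hh]⟩

lemma dn_set_bddAbove (hh : IsNorm h) (hm : 0 < m) (g : Fin m → ℝ) :
    BddAbove {r | ∃ θ : Fin m → ℝ, h θ ≤ 1 ∧ r = ∑ i, g i * θ i} := by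
  obtain ⟨c, hc, hcl⟩ := h_lower hh hm
  refine ⟨(∑ i, |g i|) * c⁻¹, fun r hr => ?_⟩
  obtain ⟨θ, hθ, rfl⟩ := hr
  have hθn : ‖θ‖ ≤ c⁻¹ := by
    have := hcl θ
    rw [← le_div_iff₀' hc] at this
    calc ‖θ‖ ≤ h θ / c := this
      _ ≤ 1 / c := by gcongr
      _ = c⁻¹ := one_div c
  calc ∑ i, g i * θ i ≤ ∑ i, |g i| * c⁻¹ := by
        refine Finset.sum_le_sum fun i _ => ?_
        calc g i * θ i ≤ |g i * θ i| := le_abs_self _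
          _ = |g i| * |θ i| := abs_mul _ _
          _ ≤ |g i| * c⁻¹ := by
              refine mul_le_mul_of_nonneg_left ?_ (abs_nonneg _)
              exact le_trans (by simpa [Real.norm_eq_abs] using norm_le_pi_norm θ i) hθn
    _ = (∑ i, |g i|) * c⁻¹ := by rw [Finset.sum_mul]

lemma le_dualNorm (hh : IsNorm h) (hm : 0 < m) {θ : Fin m → ℝ} (hθ : h θ ≤ 1) (g : Fin m → ℝ) :
    ∑ i, g i * θ i ≤ dualNorm h g :=
  le_csSup (dn_set_bddAbove hh hm g) ⟨θ, hθ, rfl⟩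

lemma dualNorm_le (hh : IsNorm h) {g : Fin m → ℝ} {a : ℝ}
    (ha : ∀ θ : Fin m → ℝ, h θ ≤ 1 → ∑ i, g i * θ i ≤ a) : dualNorm h g ≤ a :=
  csSup_le (dn_set_nonempty hh g) (fun r hr => by obtain ⟨θ, h1, rfl⟩ := hr; exact ha θ h1)

lemma dualNorm_nonneg (hh : IsNorm h) (hm : 0 < m) (g : Fin m → ℝ) : 0 ≤ dualNorm h g := by
  have := le_dualNorm hh hm (by simp [h_zero hh] : h (0 : Fin m → ℝ) ≤ 1) g
  simpa using this

lemma dualNorm_zero (hh : IsNorm h) : dualNorm h 0 = 0 := by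
  have e : {r | ∃ θ : Fin m → ℝ, h θ ≤ 1 ∧ r = ∑ i, (0:Fin m → ℝ) i * θ i} = {0} := by
    ext r
    constructor
    · rintro ⟨θ, hθ, rfl⟩; simp
    · rintro rfl; exact ⟨0, by simp [h_zero hh]⟩
  rw [dualNorm, e, csSup_singleton]

lemma dualNorm_smul (hh : IsNorm h) (hm : 0 < m) {t : ℝ} (ht : 0 ≤ t) (g : Fin m → ℝ) :
    dualNorm h (t • g) = t * dualNorm h g := by
  rcases eq_or_lt_of_le ht with rfl | htp
  · simp [dualNorm_zero hh]
  refine le_antisymm ?_ ?_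
  · refine dualNorm_le hh fun θ hθ => ?_
    have e : ∑ i, (t • g) i * θ i = t * ∑ i, g i * θ i := by
      rw [Finset.mul_sum]; exact Finset.sum_congr rfl fun i _ => by simp; ring
    rw [e]
    exact mul_le_mul_of_nonneg_left (le_dualNorm hh hm hθ g) ht
  · rw [mul_comm, ← le_div_iff₀ htp]
    refine dualNorm_le hh fun θ hθ => ?_
    rw [le_div_iff₀ htp, mul_comm]
    have e : t * ∑ i, g i * θ i = ∑ i, (t • g) i * θ i := by
      rw [Finset.mul_sum]; exact Finset.sum_congr rfl fun i _ => by simp; ring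
    rw [e]
    exact le_dualNorm hh hm hθ _

lemma h_decomp (hh : IsNorm h) (g : Fin m → ℝ) :
    h g ≤ ∑ j, |g j| * h (Pi.single j 1) := by
  set e : Fin m → Fin m → ℝ := fun i => Pi.single i 1 with he
  have hx : g = ∑ i, (g i) • e i := by
    ext j
    simp [he, Finset.sum_apply, Pi.single_apply]
  calc h g = h (∑ i, (g i) • e i) := by rw [← hx]
    _ ≤ ∑ i, h ((g i) • e i) := h_sum_le hh _ _
    _ = ∑ i, |g i| * h (e i) := by simp [hh.2.1]

lemma abs_le_dualNorm (hh : IsNorm h) (hm : 0 < m) (g : Fin m → ℝ) (i : Fin m) :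
    |g i| ≤ hC h * dualNorm h g := by
  rcases eq_or_ne g 0 with rfl | hg
  · simp [dualNorm_zero hh]
  have hgp : 0 < h g := h_pos hh hg
  set θ : Fin m → ℝ := (h g)⁻¹ • g with hθdef
  have hθ : h θ ≤ 1 := by
    rw [hθdef, hh.2.1, abs_inv, abs_of_pos hgp, inv_mul_cancel₀ hgp.ne']
  have h1 : (∑ j, g j ^ 2) / h g ≤ dualNorm h g := by
    have := le_dualNorm hh hm hθ g
    have e : ∑ j, g j * θ j = (∑ j, g j ^ 2) / h g := by
      rw [hθdef, Finset.sum_div]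
      exact Finset.sum_congr rfl fun j _ => by simp [Pi.smul_apply]; ring
    rw [e] at this; exact this
  have h2 : |g i| * h g ≤ hC h * ∑ j, g j ^ 2 := by
    calc |g i| * h g ≤ |g i| * ∑ j, |g j| * h (Pi.single j 1) := by
          refine mul_le_mul_of_nonneg_left ?_ (abs_nonneg _)
          exact h_decomp hh g
      _ = ∑ j, h (Pi.single j 1) * (|g i| * |g j|) := by
          rw [Finset.mul_sum]; exact Finset.sum_congr rfl fun j _ => by ring
      _ ≤ ∑ j, h (Pi.single j 1) * ∑ k, g k ^ 2 := by
          refine Finset.sum_le_sum fun j _ => ?_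
          refine mul_le_mul_of_nonneg_left ?_ (h_nonneg hh _)
          have hij : |g i| * |g j| ≤ (g i ^ 2 + g j ^ 2) / 2 := by
            nlinarith [sq_nonneg (|g i| - |g j|), sq_abs (g i), sq_abs (g j)]
          have hi2 : g i ^ 2 ≤ ∑ k, g k ^ 2 :=
            Finset.single_le_sum (f := fun k => g k ^ 2) (fun k _ => sq_nonneg _) (Finset.mem_univ i)
          have hj2 : g j ^ 2 ≤ ∑ k, g k ^ 2 :=
            Finset.single_le_sum (f := fun k => g k ^ 2) (fun k _ => sq_nonneg _) (Finset.mem_univ j)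
          linarith
      _ = hC h * ∑ j, g j ^ 2 := by rw [hC, Finset.sum_mul]
  calc |g i| = (|g i| * h g) / h g := by field_simp
    _ ≤ (hC h * ∑ j, g j ^ 2) / h g := by gcongr
    _ = hC h * ((∑ j, g j ^ 2) / h g) := by ring
    _ ≤ hC h * dualNorm h g := mul_le_mul_of_nonneg_left h1 (hC_nonneg hh)

end S8
namespace S8
open Metric Function Set MeasureTheory
open scoped ENNReal

variable {m n : ℕ} {h : (Fin m → ℝ) → ℝ}

/-! ### Facts about the generated norm -/

lemma matVec_zero (u : Euc n) : matVec (0 : Fin m → Fin n → ℝ) u = 0 := by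
  ext i; simp [matVec]

lemma inSubdiffH_zero (hh : IsNorm h) : inSubdiffH h (0 : Fin m → Fin n → ℝ) := by
  intro u hu; rw [matVec_zero, dualNorm_zero hh]; norm_num

lemma matVec_smul (t : ℝ) (M : Fin m → Fin n → ℝ) (u : Euc n) :
    matVec (t • M) u = t • matVec M u := by
  ext i; simp [matVec, Finset.mul_sum]; exact Finset.sum_congr rfl fun j _ => by ring

lemma inSubdiffH_smul (hh : IsNorm h) (hm : 0 < m) {t : ℝ} (ht0 : 0 ≤ t) (ht1 : t ≤ 1)
    {M : Fin m → Fin n → ℝ} (hM : inSubdiffH h M) : inSubdiffH h (t • M) := by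
  intro u hu
  rw [matVec_smul, dualNorm_smul hh hm ht0]
  calc t * dualNorm h (matVec M u) ≤ 1 * 1 :=
        mul_le_mul ht1 (hM u hu) (dualNorm_nonneg hh hm _) zero_le_one
    _ = 1 := one_mul 1

lemma entry_bound (hh : IsNorm h) (hm : 0 < m) {M : Fin m → Fin n → ℝ}
    (hM : inSubdiffH h M) (i : Fin m) (j : Fin n) : |M i j| ≤ hC h := by
  have hu : ‖(EuclideanSpace.single j (1:ℝ) : Euc n)‖ ≤ 1 := by
    rw [EuclideanSpace.norm_single]; norm_num
  have h1 := hM _ hu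
  have h2 := abs_le_dualNorm hh hm (matVec M (EuclideanSpace.single j 1)) i
  have e : matVec M (EuclideanSpace.single j 1) i = M i j := by
    simp [matVec, EuclideanSpace.single_apply]
  rw [e] at h2
  calc |M i j| ≤ hC h * dualNorm h (matVec M (EuclideanSpace.single j 1)) := h2
    _ ≤ hC h * 1 := mul_le_mul_of_nonneg_left h1 (hC_nonneg hh)
    _ = hC h := mul_one _

lemma frob_le_of_mem (hh : IsNorm h) (hm : 0 < m) {M : Fin m → Fin n → ℝ}
    (hM : inSubdiffH h M) (N : Fin m → Fin n → ℝ) :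
    frob M N ≤ hC h * ∑ i, ∑ j, |N i j| := by
  calc frob M N ≤ ∑ i, ∑ j, |M i j| * |N i j| := by
        refine Finset.sum_le_sum fun i _ => Finset.sum_le_sum fun j _ => ?_
        calc M i j * N i j ≤ |M i j * N i j| := le_abs_self _
          _ = |M i j| * |N i j| := abs_mul _ _
    _ ≤ ∑ i, ∑ j, hC h * |N i j| := by
        refine Finset.sum_le_sum fun i _ => Finset.sum_le_sum fun j _ => ?_
        exact mul_le_mul_of_nonneg_right (entry_bound hh hm hM i j) (abs_nonneg _)
    _ = hC h * ∑ i, ∑ j, |N i j| := by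
        rw [Finset.mul_sum]
        exact Finset.sum_congr rfl fun i _ => (Finset.mul_sum _ _ _).symm

lemma gn_set_nonempty (hh : IsNorm h) (N : Fin m → Fin n → ℝ) :
    {r | ∃ M : Fin m → Fin n → ℝ, inSubdiffH h M ∧ r = frob M N}.Nonempty :=
  ⟨0, 0, inSubdiffH_zero hh, by simp [frob]⟩

lemma gn_set_bddAbove (hh : IsNorm h) (hm : 0 < m) (N : Fin m → Fin n → ℝ) :
    BddAbove {r | ∃ M : Fin m → Fin n → ℝ, inSubdiffH h M ∧ r = frob M N} := by
  refine ⟨hC h * ∑ i, ∑ j, |N i j|, fun r hr => ?_⟩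
  obtain ⟨M, hM, rfl⟩ := hr
  exact frob_le_of_mem hh hm hM N

lemma frob_le_genNorm (hh : IsNorm h) (hm : 0 < m) {M : Fin m → Fin n → ℝ}
    (hM : inSubdiffH h M) (N : Fin m → Fin n → ℝ) : frob M N ≤ genNorm h N :=
  le_csSup (gn_set_bddAbove hh hm N) ⟨M, hM, rfl⟩

lemma genNorm_le (hh : IsNorm h) {N : Fin m → Fin n → ℝ} {a : ℝ}
    (ha : ∀ M : Fin m → Fin n → ℝ, inSubdiffH h M → frob M N ≤ a) : genNorm h N ≤ a :=
  csSup_le (gn_set_nonempty hh N) fun r hr => by obtain ⟨M, hM, rfl⟩ := hr; exact ha M hM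

lemma genNorm_nonneg (hh : IsNorm h) (hm : 0 < m) (N : Fin m → Fin n → ℝ) :
    0 ≤ genNorm h N := by
  have := frob_le_genNorm hh hm (inSubdiffH_zero hh) N
  simpa [frob] using this

lemma genNorm_zero (hh : IsNorm h) (hm : 0 < m) : genNorm h (0 : Fin m → Fin n → ℝ) = 0 :=
  le_antisymm (genNorm_le hh fun M _ => by simp [frob]) (genNorm_nonneg hh hm 0)

lemma genNorm_le_bound (hh : IsNorm h) (hm : 0 < m) (N : Fin m → Fin n → ℝ) :
    genNorm h N ≤ hC h * ∑ i, ∑ j, |N i j| :=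
  genNorm_le hh fun M hM => frob_le_of_mem hh hm hM N

lemma exists_near_genNorm (hh : IsNorm h) (hm : 0 < m) (N : Fin m → Fin n → ℝ)
    {ε : ℝ} (hε : 0 < ε) :
    ∃ M : Fin m → Fin n → ℝ, inSubdiffH h M ∧ genNorm h N - ε ≤ frob M N := by
  obtain ⟨r, hr, hrg⟩ := exists_lt_of_lt_csSup (gn_set_nonempty hh N)
    (show genNorm h N - ε < genNorm h N by linarith)
  obtain ⟨M, hM, rfl⟩ := hr
  exact ⟨M, hM, hrg.le⟩

/-! ### Facts about integration against signed measures -/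

/-- The total-variation measure of a signed measure. -/
def vμ {n : ℕ} (ν : SignedMeasure (Euc n)) : Measure (Euc n) :=
  ν.toJordanDecomposition.posPart + ν.toJordanDecomposition.negPart

instance {n : ℕ} (ν : SignedMeasure (Euc n)) : IsFiniteMeasure (vμ ν) := by
  unfold vμ; infer_instance

lemma sm_apply {n : ℕ} (ν : SignedMeasure (Euc n)) {B : Set (Euc n)} (hB : MeasurableSet B) :
    ν B = (ν.toJordanDecomposition.posPart B).toReal -
      (ν.toJordanDecomposition.negPart B).toReal := by
  conv_lhs => rw [← ν.toSignedMeasure_toJordanDecomposition]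
  rw [JordanDecomposition.toSignedMeasure, VectorMeasure.sub_apply,
    Measure.toSignedMeasure_apply_measurable hB, Measure.toSignedMeasure_apply_measurable hB]
  rfl

lemma abs_sm_le {n : ℕ} (ν : SignedMeasure (Euc n)) {B : Set (Euc n)} (hB : MeasurableSet B) :
    |ν B| ≤ (vμ ν B).toReal := by
  rw [sm_apply ν hB, vμ, Measure.add_apply,
    ENNReal.toReal_add (measure_ne_top _ _) (measure_ne_top _ _)]
  have h1 : (0:ℝ) ≤ (ν.toJordanDecomposition.posPart B).toReal := ENNReal.toReal_nonneg
  have h2 : (0:ℝ) ≤ (ν.toJordanDecomposition.negPart B).toReal := ENNReal.toReal_nonneg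
  rw [abs_sub_le_iff]; constructor <;> linarith

lemma integrable_posneg {n : ℕ} {ν : SignedMeasure (Euc n)} {f : Euc n → ℝ}
    (hf : Integrable f (vμ ν)) :
    Integrable f ν.toJordanDecomposition.posPart ∧ Integrable f ν.toJordanDecomposition.negPart :=
  integrable_add_measure.1 hf

lemma sInt_add {n : ℕ} (ν : SignedMeasure (Euc n)) {f g : Euc n → ℝ}
    (hf : Integrable f (vμ ν)) (hg : Integrable g (vμ ν)) :
    sInt ν (fun x => f x + g x) = sInt ν f + sInt ν g := by
  obtain ⟨hf1, hf2⟩ := integrable_posneg hf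
  obtain ⟨hg1, hg2⟩ := integrable_posneg hg
  simp only [sInt]
  rw [integral_add hf1 hg1, integral_add hf2 hg2]; ring

lemma sInt_sub {n : ℕ} (ν : SignedMeasure (Euc n)) {f g : Euc n → ℝ}
    (hf : Integrable f (vμ ν)) (hg : Integrable g (vμ ν)) :
    sInt ν (fun x => f x - g x) = sInt ν f - sInt ν g := by
  obtain ⟨hf1, hf2⟩ := integrable_posneg hf
  obtain ⟨hg1, hg2⟩ := integrable_posneg hg
  simp only [sInt]
  rw [integral_sub hf1 hg1, integral_sub hf2 hg2]; ring

lemma sInt_sum {n : ℕ} {ι : Type*} (s : Finset ι) (ν : SignedMeasure (Euc n)) (f : ι → Euc n → ℝ)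
    (hf : ∀ i ∈ s, Integrable (f i) (vμ ν)) :
    sInt ν (∑ i ∈ s, f i) = ∑ i ∈ s, sInt ν (f i) := by
  classical
  induction s using Finset.induction with
  | empty => simp [sInt]
  | @insert a s ha ih =>
    rw [Finset.sum_insert ha, Finset.sum_insert ha,
      ← ih fun i hi => hf i (Finset.mem_insert_of_mem hi)]
    have hint : Integrable (∑ x ∈ s, f x) (vμ ν) := by
      have := integrable_finset_sum s fun i hi => hf i (Finset.mem_insert_of_mem hi)
      simpa [Finset.sum_fn] using this
    have e : sInt ν (f a + ∑ x ∈ s, f x) = sInt ν (fun x => f a x + (∑ x' ∈ s, f x') x) := rfl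
    rw [e, sInt_add ν (hf a (Finset.mem_insert_self a s)) hint]

lemma sInt_const_mul {n : ℕ} (ν : SignedMeasure (Euc n)) (c : ℝ) (f : Euc n → ℝ) :
    sInt ν (fun x => c * f x) = c * sInt ν f := by
  simp only [sInt, integral_const_mul]; ring

lemma sInt_indicator {n : ℕ} (ν : SignedMeasure (Euc n)) {B : Set (Euc n)}
    (hB : MeasurableSet B) :
    sInt ν (B.indicator fun _ => (1:ℝ)) = ν B := by
  simp only [sInt, integral_indicator_const (1:ℝ) hB, smul_eq_mul, mul_one]
  exact (sm_apply ν hB).symm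

lemma abs_sInt_le {n : ℕ} (ν : SignedMeasure (Euc n)) {f : Euc n → ℝ}
    (hf : Integrable f (vμ ν)) :
    |sInt ν f| ≤ ∫ x, |f x| ∂(vμ ν) := by
  obtain ⟨hf1, hf2⟩ := integrable_posneg hf
  have e : ∫ x, |f x| ∂(vμ ν) = ∫ x, |f x| ∂ν.toJordanDecomposition.posPart
      + ∫ x, |f x| ∂ν.toJordanDecomposition.negPart := integral_add_measure hf1.abs hf2.abs
  rw [sInt, e]
  have b1 : |∫ x, f x ∂ν.toJordanDecomposition.posPart|
      ≤ ∫ x, |f x| ∂ν.toJordanDecomposition.posPart := by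
    simpa [Real.norm_eq_abs] using
      norm_integral_le_integral_norm (μ := ν.toJordanDecomposition.posPart) f
  have b2 : |∫ x, f x ∂ν.toJordanDecomposition.negPart|
      ≤ ∫ x, |f x| ∂ν.toJordanDecomposition.negPart := by
    simpa [Real.norm_eq_abs] using
      norm_integral_le_integral_norm (μ := ν.toJordanDecomposition.negPart) f
  calc |∫ x, f x ∂ν.toJordanDecomposition.posPart - ∫ x, f x ∂ν.toJordanDecomposition.negPart|
      ≤ |∫ x, f x ∂ν.toJordanDecomposition.posPart|
        + |∫ x, f x ∂ν.toJordanDecomposition.negPart| :=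
        abs_sub (∫ x, f x ∂ν.toJordanDecomposition.posPart)
          (∫ x, f x ∂ν.toJordanDecomposition.negPart)
    _ ≤ _ := add_le_add b1 b2

lemma integral_abs_le_of_le_indicator {n : ℕ} {μ : Measure (Euc n)} [IsFiniteMeasure μ]
    {f : Euc n → ℝ} {s : Set (Euc n)} {c : ℝ} (hs : MeasurableSet s)
    (hf : Integrable f μ) (hb : ∀ x, |f x| ≤ s.indicator (fun _ => c) x) :
    ∫ x, |f x| ∂μ ≤ c * (μ s).toReal := by
  have h1 : Integrable (s.indicator fun _ => c) μ := (integrable_const c).indicator hs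
  calc ∫ x, |f x| ∂μ ≤ ∫ x, s.indicator (fun _ => c) x ∂μ := integral_mono hf.abs h1 hb
    _ = (μ s).toReal • c := integral_indicator_const c hs
    _ = c * (μ s).toReal := by rw [smul_eq_mul]; ring

/-! ### The total measure of a matrix measure -/

def totalμ {m n : ℕ} (F : MatMeas m n) : Measure (Euc n) :=
  ∑ i : Fin m, ∑ j : Fin n, vμ (F i j)

instance {m n : ℕ} (F : MatMeas m n) : IsFiniteMeasure (totalμ F) := by
  unfold totalμ; infer_instance

lemma totalμ_apply {m n : ℕ} (F : MatMeas m n) (B : Set (Euc n)) :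
    totalμ F B = ∑ i, ∑ j, vμ (F i j) B := by
  rw [totalμ, Measure.finset_sum_apply]
  exact Finset.sum_congr rfl fun i _ => Measure.finset_sum_apply _ _ _

lemma vμ_le_totalμ {m n : ℕ} (F : MatMeas m n) (i : Fin m) (j : Fin n) (B : Set (Euc n)) :
    vμ (F i j) B ≤ totalμ F B := by
  rw [totalμ_apply]
  calc vμ (F i j) B ≤ ∑ j', vμ (F i j') B :=
        Finset.single_le_sum (f := fun j' => vμ (F i j') B) (fun _ _ => zero_le)
          (Finset.mem_univ j)
    _ ≤ ∑ i', ∑ j', vμ (F i' j') B :=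
        Finset.single_le_sum (f := fun i' => ∑ j', vμ (F i' j') B) (fun _ _ => zero_le)
          (Finset.mem_univ i)

lemma sum_toReal_vμ {m n : ℕ} (F : MatMeas m n) (B : Set (Euc n)) :
    ∑ i, ∑ j, (vμ (F i j) B).toReal = (totalμ F B).toReal := by
  rw [totalμ_apply,
    ENNReal.toReal_sum (fun i _ => ENNReal.sum_ne_top.2 fun j _ => measure_ne_top _ _)]
  exact Finset.sum_congr rfl fun i _ =>
    (ENNReal.toReal_sum fun j _ => measure_ne_top _ _).symm

end S8
namespace S8
open Metric Function Set MeasureTheory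
open scoped ENNReal Manifold

variable {m n : ℕ} {h : (Fin m → ℝ) → ℝ}

lemma genNorm_F_le (hh : IsNorm h) (hm : 0 < m) (F : MatMeas m n) {B : Set (Euc n)}
    (hB : MeasurableSet B) :
    genNorm h (fun i j => F i j B) ≤ hC h * (totalμ F B).toReal := by
  calc genNorm h (fun i j => F i j B) ≤ hC h * ∑ i, ∑ j, |F i j B| :=
        genNorm_le_bound hh hm _
    _ ≤ hC h * ∑ i, ∑ j, (vμ (F i j) B).toReal := by
        refine mul_le_mul_of_nonneg_left ?_ (hC_nonneg hh)
        exact Finset.sum_le_sum fun i _ => Finset.sum_le_sum fun j _ => abs_sm_le _ hB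
    _ = hC h * (totalμ F B).toReal := by rw [sum_toReal_vμ]

lemma summable_tot (F : MatMeas m n) {B : ℕ → Set (Euc n)}
    (hBm : ∀ k, MeasurableSet (B k)) (hBd : Pairwise (Function.onFun Disjoint B)) :
    Summable (fun k => (totalμ F (B k)).toReal) ∧
      ∑' k, (totalμ F (B k)).toReal ≤ (totalμ F univ).toReal := by
  have h1 : ∑' k, totalμ F (B k) = totalμ F (⋃ k, B k) := (measure_iUnion hBd hBm).symm
  have h2 : ∑' k, totalμ F (B k) ≠ ⊤ := by rw [h1]; exact measure_ne_top _ _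
  refine ⟨ENNReal.summable_toReal h2, ?_⟩
  rw [← ENNReal.tsum_toReal_eq fun k => measure_ne_top _ _]
  exact ENNReal.toReal_mono (measure_ne_top _ _) (h1 ▸ measure_mono (subset_univ _))

lemma summable_g (hh : IsNorm h) (hm : 0 < m) (F : MatMeas m n) {B : ℕ → Set (Euc n)}
    (hBm : ∀ k, MeasurableSet (B k)) (hBd : Pairwise (Function.onFun Disjoint B)) :
    Summable (fun k => genNorm h (fun i j => F i j (B k))) ∧
      ∑' k, genNorm h (fun i j => F i j (B k)) ≤ hC h * (totalμ F univ).toReal := by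
  obtain ⟨hsum, hle⟩ := summable_tot F hBm hBd
  have hcomp : ∀ k, genNorm h (fun i j => F i j (B k)) ≤ hC h * (totalμ F (B k)).toReal :=
    fun k => genNorm_F_le hh hm F (hBm k)
  have hs2 : Summable (fun k => hC h * (totalμ F (B k)).toReal) := hsum.mul_left _
  have hs1 : Summable (fun k => genNorm h (fun i j => F i j (B k))) :=
    Summable.of_nonneg_of_le (fun k => genNorm_nonneg hh hm _) hcomp hs2
  refine ⟨hs1, ?_⟩
  calc ∑' k, genNorm h (fun i j => F i j (B k)) ≤ ∑' k, hC h * (totalμ F (B k)).toReal :=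
        Summable.tsum_le_tsum hcomp hs1 hs2
    _ = hC h * ∑' k, (totalμ F (B k)).toReal := tsum_mul_left
    _ ≤ hC h * (totalμ F univ).toReal := mul_le_mul_of_nonneg_left hle (hC_nonneg hh)

lemma tvH_bddAbove (hh : IsNorm h) (hm : 0 < m) (F : MatMeas m n) :
    BddAbove {r | ∃ B : ℕ → Set (Euc n), (∀ k, MeasurableSet (B k)) ∧
      Pairwise (Function.onFun Disjoint B) ∧ (⋃ k, B k) = Set.univ ∧
      r = ∑' k, genNorm h (fun i j => F i j (B k))} := by
  refine ⟨hC h * (totalμ F univ).toReal, fun r hr => ?_⟩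
  obtain ⟨B, hBm, hBd, _, rfl⟩ := hr
  exact (summable_g hh hm F hBm hBd).2

lemma tvH_set_nonempty (hh : IsNorm h) (F : MatMeas m n) :
    {r | ∃ B : ℕ → Set (Euc n), (∀ k, MeasurableSet (B k)) ∧
      Pairwise (Function.onFun Disjoint B) ∧ (⋃ k, B k) = Set.univ ∧
      r = ∑' k, genNorm h (fun i j => F i j (B k))}.Nonempty := by
  refine ⟨_, fun k => if k = 0 then univ else ∅, fun k => ?_, ?_, ?_, rfl⟩
  · by_cases hk : k = 0 <;> simp [hk]
  · intro k l hkl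
    simp only [Function.onFun]
    rcases eq_or_ne k 0 with rfl | hk
    · rw [if_neg (Ne.symm hkl)]
      exact Set.disjoint_empty _ |>.symm.symm |>.mono le_rfl le_rfl |>.symm.symm
    · rw [if_neg hk]
      exact Set.empty_disjoint _
  · refine subset_antisymm (subset_univ _) fun x _ => ?_
    exact mem_iUnion.2 ⟨0, by simp⟩

/-- Smooth Urysohn lemma on `Euc n`. -/
lemma smooth_urysohn {n : ℕ} {s t : Set (Euc n)} (hs : IsClosed s) (ht : IsClosed t)
    (hd : Disjoint s t) :
    ∃ f : Euc n → ℝ, ContDiff ℝ (⊤ : ℕ∞) f ∧ Set.EqOn f 0 s ∧ Set.EqOn f 1 t ∧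
      ∀ x, f x ∈ Icc (0:ℝ) 1 := by
  obtain ⟨f, h0, h1, hicc⟩ := exists_contMDiffMap_zero_one_of_isClosed (𝓘(ℝ, Euc n)) hs ht hd
  exact ⟨f, (contMDiff_iff_contDiff).1 f.2, h0, h1, hicc⟩

/-- Integrability of a matrix entry of a continuous compactly supported matrix field. -/
lemma integrable_entry {m n : ℕ} {ω : Euc n → (Fin m → Fin n → ℝ)}
    (hs : Continuous ω) (hc : HasCompactSupport ω) (i : Fin m) (j : Fin n)
    (μ : Measure (Euc n)) [IsFiniteMeasure μ] :
    Integrable (fun x => ω x i j) μ := by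
  have hcont : Continuous (fun x => ω x i j) :=
    (continuous_apply j).comp ((continuous_apply i).comp hs)
  have hsupp : HasCompactSupport (fun x => ω x i j) := by
    have : (fun x => ω x i j) = (fun v : Fin m → Fin n → ℝ => v i j) ∘ ω := rfl
    rw [this]
    exact hc.comp_left rfl
  exact hcont.integrable_of_hasCompactSupport hsupp

/-- Sum of compactly supported functions has compact support. -/
lemma hcs_sum {n : ℕ} {β : Type*} [AddCommGroup β] [TopologicalSpace β] {ι : Type*}
    (s : Finset ι) (f : ι → Euc n → β) (hf : ∀ i ∈ s, HasCompactSupport (f i)) :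
    HasCompactSupport (fun x => ∑ i ∈ s, f i x) := by
  classical
  induction s using Finset.induction with
  | empty => simp only [Finset.sum_empty]; exact HasCompactSupport.zero
  | @insert a s ha ih =>
    have : (fun x => ∑ i ∈ insert a s, f i x) = (fun x => f a x + ∑ i ∈ s, f i x) := by
      funext x; rw [Finset.sum_insert ha]
    rw [this]
    exact (hf a (Finset.mem_insert_self a s)).add
      (ih fun i hi => hf i (Finset.mem_insert_of_mem hi))

lemma ff_le (hh : IsNorm h) (hm : 0 < m) (F : MatMeas m n)
    {ω : Euc n → (Fin m → Fin n → ℝ)} (hs : ContDiff ℝ (⊤ : ℕ∞) ω)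
    (hc : HasCompactSupport ω) (ha : ∀ x, inSubdiffH h (ω x)) :
    (∑ i, ∑ j, sInt (F i j) fun x => ω x i j) ≤ hC h * (totalμ F univ).toReal := by
  have hij : ∀ (i : Fin m) (j : Fin n),
      sInt (F i j) (fun x => ω x i j) ≤ hC h * (vμ (F i j) univ).toReal := by
    intro i j
    have hint : Integrable (fun x => ω x i j) (vμ (F i j)) :=
      integrable_entry hs.continuous hc i j _
    calc sInt (F i j) (fun x => ω x i j) ≤ |sInt (F i j) (fun x => ω x i j)| := le_abs_self _
      _ ≤ ∫ x, |ω x i j| ∂(vμ (F i j)) := abs_sInt_le _ hint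
      _ ≤ hC h * (vμ (F i j) univ).toReal := by
          refine integral_abs_le_of_le_indicator MeasurableSet.univ hint fun x => ?_
          rw [indicator_univ]
          exact entry_bound hh hm (ha x) i j
  calc (∑ i, ∑ j, sInt (F i j) fun x => ω x i j)
      ≤ ∑ i, ∑ j, hC h * (vμ (F i j) univ).toReal :=
        Finset.sum_le_sum fun i _ => Finset.sum_le_sum fun j _ => hij i j
    _ = hC h * ∑ i, ∑ j, (vμ (F i j) univ).toReal := by
        rw [Finset.mul_sum]
        exact Finset.sum_congr rfl fun i _ => (Finset.mul_sum _ _ _).symm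
    _ = hC h * (totalμ F univ).toReal := by rw [sum_toReal_vμ]

lemma ff_bddAbove (hh : IsNorm h) (hm : 0 < m) (F : MatMeas m n) :
    BddAbove {r | ∃ ω : Euc n → (Fin m → Fin n → ℝ), ContDiff ℝ (⊤ : ℕ∞) ω ∧
      HasCompactSupport ω ∧ (∀ x, inSubdiffH h (ω x)) ∧
      r = ∑ i, ∑ j, sInt (F i j) fun x => ω x i j} := by
  refine ⟨hC h * (totalμ F univ).toReal, fun r hr => ?_⟩
  obtain ⟨ω, hs, hc, ha, rfl⟩ := hr
  exact ff_le hh hm F hs hc ha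

lemma ff_set_nonempty (hh : IsNorm h) (F : MatMeas m n) :
    {r | ∃ ω : Euc n → (Fin m → Fin n → ℝ), ContDiff ℝ (⊤ : ℕ∞) ω ∧
      HasCompactSupport ω ∧ (∀ x, inSubdiffH h (ω x)) ∧
      r = ∑ i, ∑ j, sInt (F i j) fun x => ω x i j}.Nonempty := by
  refine ⟨_, fun _ => 0, contDiff_const, ?_, fun x => inSubdiffH_zero hh, rfl⟩
  exact HasCompactSupport.zero

end S8
namespace S8
open Metric Function Set MeasureTheory
open scoped ENNReal

variable {m n : ℕ} {h : (Fin m → ℝ) → ℝ}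

lemma partA (hh : IsNorm h) (hm : 0 < m) (F : MatMeas m n)
    (ω : Euc n → (Fin m → Fin n → ℝ)) (hs : ContDiff ℝ (⊤ : ℕ∞) ω)
    (hcs : HasCompactSupport ω) (ha : ∀ x, inSubdiffH h (ω x)) :
    (∑ i, ∑ j, sInt (F i j) fun x => ω x i j) ≤ tvH h F := by
  classical
  refine le_of_forall_pos_le_add fun ε' hε' => ?_
  set T : ℝ := (totalμ F univ).toReal with hT
  have hT0 : 0 ≤ T := ENNReal.toReal_nonneg
  set ε : ℝ := ε' / (T + 1) with hεdef
  have hε : 0 < ε := by positivity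
  -- uniform continuity
  obtain ⟨δ, hδ, hud⟩ := Metric.uniformContinuous_iff.1
    (hcs.uniformContinuous_of_continuous hs.continuous) ε hε
  -- finite subcover of the support by δ-balls
  obtain ⟨t, -, htsub⟩ := IsCompact.elim_nhds_subcover hcs (fun x => Metric.ball x δ)
    (fun x _ => Metric.ball_mem_nhds x hδ)
  set L : List (Euc n) := t.toList with hL
  set K : ℕ := L.length with hKdef
  set c : ℕ → Euc n := fun k => L.getD k 0 with hcdef
  set V : ℕ → Set (Euc n) := fun k => if k < K then Metric.ball (c k) δ else ∅ with hV
  set D : ℕ → Set (Euc n) := fun k =>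
    if k = K then (⋃ j, V j)ᶜ else V k \ ⋃ j < k, V j with hD
  have hVmeas : ∀ k, MeasurableSet (V k) := fun k => by
    by_cases hk : k < K <;> simp [hV, hk, measurableSet_ball]
  have hDK : D K = (⋃ j, V j)ᶜ := by simp [hD]
  have hDne : ∀ k, k ≠ K → D k = V k \ ⋃ j < k, V j := fun k hk => by simp [hD, hk]
  have hDmeas : ∀ k, MeasurableSet (D k) := fun k => by
    rcases eq_or_ne k K with rfl | hk
    · rw [hDK]; exact (MeasurableSet.iUnion fun j => hVmeas j).compl
    · rw [hDne k hk]
      exact (hVmeas k).diff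
        (MeasurableSet.iUnion fun j => MeasurableSet.iUnion fun _ => hVmeas j)
  have hDV : ∀ k, k ≠ K → D k ⊆ V k := fun k hk => by rw [hDne k hk]; exact diff_subset
  have hVempty : ∀ k, ¬ k < K → V k = ∅ := fun k hk => by simp [hV, hk]
  have hDempty : ∀ k, K < k → D k = ∅ := fun k hk => by
    rw [hDne k (by omega), hVempty k (by omega)]
    simp
  have hDdisj : Pairwise (Function.onFun Disjoint D) := by
    have main : ∀ a b, a ≠ K → b ≠ K → a < b → Disjoint (D a) (D b) := by
      intro a b haK hbK hab
      have h1 : D a ⊆ V a := hDV a haK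
      have h2 : Disjoint (V a) (D b) := by
        rw [hDne b hbK, Set.disjoint_right]
        intro x hx hxa
        exact hx.2 (Set.mem_biUnion hab hxa)
      exact (h2.mono_left h1)
    intro k l hkl
    simp only [Function.onFun]
    rcases eq_or_ne k K with rfl | hk
    · have hl : l ≠ K := hkl.symm
      rw [hDK]
      exact disjoint_compl_left.mono_right ((hDV l hl).trans (subset_iUnion V l))
    · rcases eq_or_ne l K with rfl | hl
      · rw [hDK]
        exact (disjoint_compl_left.mono_right ((hDV k hk).trans (subset_iUnion V k))).symm
      · rcases lt_or_gt_of_ne hkl with hlt | hgt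
        · exact main k l hk hl hlt
        · exact (main l k hl hk hgt).symm
  have hDunion : (⋃ k, D k) = univ := by
    ext x
    simp only [mem_iUnion, mem_univ, iff_true]
    by_cases hx : x ∈ ⋃ j, V j
    · obtain ⟨j0, hj0⟩ := mem_iUnion.1 hx
      have hex : ∃ k, x ∈ V k := ⟨j0, hj0⟩
      have hk0 : x ∈ V (Nat.find hex) := Nat.find_spec hex
      have hk0K : Nat.find hex ≠ K := by
        intro e
        rw [e, hVempty K (lt_irrefl K)] at hk0
        exact hk0
      refine ⟨Nat.find hex, ?_⟩
      rw [hDne _ hk0K]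
      refine ⟨hk0, fun hmem => ?_⟩
      obtain ⟨j, hj, hjx⟩ := Set.mem_iUnion₂.1 hmem
      exact (Nat.find_min hex hj) hjx
    · exact ⟨K, by rw [hDK]; exact hx⟩
  have hcover : tsupport ω ⊆ ⋃ j, V j := by
    intro x hx
    have hx2 := htsub hx
    obtain ⟨y, hyt, hxy⟩ := Set.mem_iUnion₂.1 hx2
    have hyL : y ∈ L := by rw [hL]; exact Finset.mem_toList.2 hyt
    obtain ⟨k, hkK, hky⟩ := List.mem_iff_getElem.1 hyL
    refine mem_iUnion.2 ⟨k, ?_⟩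
    have hck : c k = y := by
      rw [hcdef]
      simp only
      rw [List.getD_eq_getElem L 0 hkK, hky]
    rw [hV]
    simp only [if_pos (show k < K from hkK)]
    rw [hck]
    exact hxy
  -- the approximating matrices
  set Mk : ℕ → Fin m → Fin n → ℝ := fun k => if k < K then ω (c k) else 0 with hMk
  have hMksub : ∀ k, inSubdiffH h (Mk k) := by
    intro k
    by_cases hk : k < K
    · simp only [hMk, if_pos hk]; exact ha _
    · simp only [hMk, if_neg hk]; exact inSubdiffH_zero hh
  have happrox : ∀ k, ∀ x ∈ D k, ∀ i j, |ω x i j - Mk k i j| ≤ ε := by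
    intro k x hx i j
    rcases eq_or_ne k K with rfl | hk
    · rw [hDK] at hx
      have hω0 : ω x = 0 := image_eq_zero_of_notMem_tsupport fun hmem => hx (hcover hmem)
      have hM0 : Mk K = 0 := by simp [hMk]
      rw [hω0, hM0]
      simpa using hε.le
    · by_cases hkK : k < K
      · have hxV : x ∈ V k := hDV k hk hx
        have hVb : V k = Metric.ball (c k) δ := by simp [hV, hkK]
        rw [hVb] at hxV
        have h2 : dist (ω x) (ω (c k)) < ε := hud (mem_ball.1 hxV)
        have hMke : Mk k = ω (c k) := by simp [hMk, hkK]
        rw [hMke]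
        have e1 : |ω x i j - ω (c k) i j| = ‖(ω x - ω (c k)) i j‖ := by
          simp [Real.norm_eq_abs]
        calc |ω x i j - ω (c k) i j| = ‖(ω x - ω (c k)) i j‖ := e1
          _ ≤ ‖(ω x - ω (c k)) i‖ := norm_le_pi_norm _ j
          _ ≤ ‖ω x - ω (c k)‖ := norm_le_pi_norm _ i
          _ = dist (ω x) (ω (c k)) := (dist_eq_norm _ _).symm
          _ ≤ ε := h2.le
      · exact absurd hx (by rw [hDempty k (by omega)]; exact notMem_empty x)
  -- decomposition of the integral
  have hInt : ∀ (i : Fin m) (j : Fin n) (ν : SignedMeasure (Euc n)),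
      Integrable (fun x => ω x i j) (vμ ν) := fun i j ν =>
    integrable_entry hs.continuous hcs i j _
  have hsum_eq : ∀ (i : Fin m) (j : Fin n), sInt (F i j) (fun x => ω x i j)
      = ∑ k ∈ Finset.range (K+1), sInt (F i j) ((D k).indicator fun y => ω y i j) := by
    intro i j
    have e : (fun x => ω x i j)
        = ∑ k ∈ Finset.range (K+1), (D k).indicator fun y => ω y i j := by
      funext x
      have hex : ∃ k, x ∈ D k := by
        have : x ∈ ⋃ k, D k := by rw [hDunion]; exact mem_univ x
        exact mem_iUnion.1 this
      obtain ⟨k0, hk0⟩ := hex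
      have hk0le : k0 < K + 1 := by
        by_contra hgt
        rw [hDempty k0 (by omega)] at hk0
        exact hk0
      rw [Finset.sum_apply]
      rw [Finset.sum_eq_single_of_mem k0 (Finset.mem_range.2 hk0le)]
      · rw [indicator_of_mem hk0]
      · intro l _ hne
        rw [indicator_of_notMem]
        intro hxl
        exact (hDdisj hne).le_bot ⟨hxl, hk0⟩
    have hss := sInt_sum (Finset.range (K+1)) (F i j)
      (fun k => (D k).indicator fun y => ω y i j)
      (fun k _ => (hInt i j (F i j)).indicator (hDmeas k))
    rw [← hss]
    exact congrArg (sInt (F i j)) e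
  have hbound : ∀ (i : Fin m) (j : Fin n) (k : ℕ),
      sInt (F i j) ((D k).indicator fun y => ω y i j)
        ≤ Mk k i j * F i j (D k) + ε * (vμ (F i j) (D k)).toReal := by
    intro i j k
    have hsplit : (D k).indicator (fun y => ω y i j)
        = (fun x => (D k).indicator (fun y => ω y i j - Mk k i j) x
            + Mk k i j * (D k).indicator (fun _ => (1:ℝ)) x) := by
      funext x
      by_cases hx : x ∈ D k
      · simp [indicator_of_mem hx]
      · simp [indicator_of_notMem hx]
    have hint1 : Integrable ((D k).indicator fun y => ω y i j - Mk k i j) (vμ (F i j)) :=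
      ((hInt i j (F i j)).sub (integrable_const _)).indicator (hDmeas k)
    have hint2 : Integrable (fun x => Mk k i j * (D k).indicator (fun _ => (1:ℝ)) x)
        (vμ (F i j)) := (((integrable_const (1:ℝ)).indicator (hDmeas k))).const_mul _
    rw [hsplit, sInt_add _ hint1 hint2, sInt_const_mul, sInt_indicator _ (hDmeas k)]
    have e1 : sInt (F i j) ((D k).indicator fun y => ω y i j - Mk k i j)
        ≤ ε * (vμ (F i j) (D k)).toReal := by
      refine le_trans (le_abs_self _) (le_trans (abs_sInt_le _ hint1) ?_)
      refine integral_abs_le_of_le_indicator (hDmeas k) hint1 fun x => ?_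
      by_cases hx : x ∈ D k
      · rw [indicator_of_mem hx, indicator_of_mem hx]
        exact happrox k x hx i j
      · rw [indicator_of_notMem hx, indicator_of_notMem hx]; simp
    linarith
  -- assembling
  have hswap : ∀ f : Fin m → Fin n → ℕ → ℝ,
      ∑ i, ∑ j, ∑ k ∈ Finset.range (K+1), f i j k
        = ∑ k ∈ Finset.range (K+1), ∑ i, ∑ j, f i j k := by
    intro f
    calc ∑ i, ∑ j, ∑ k ∈ Finset.range (K+1), f i j k
        = ∑ i, ∑ k ∈ Finset.range (K+1), ∑ j, f i j k :=
          Finset.sum_congr rfl fun i _ => Finset.sum_comm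
      _ = ∑ k ∈ Finset.range (K+1), ∑ i, ∑ j, f i j k := Finset.sum_comm
  have htotal : (∑ i, ∑ j, sInt (F i j) fun x => ω x i j)
      ≤ (∑ k ∈ Finset.range (K+1), frob (Mk k) fun i j => F i j (D k)) + ε * T := by
    have step1 : (∑ i, ∑ j, sInt (F i j) fun x => ω x i j)
        ≤ ∑ i, ∑ j, ∑ k ∈ Finset.range (K+1),
            (Mk k i j * F i j (D k) + ε * (vμ (F i j) (D k)).toReal) := by
      calc (∑ i, ∑ j, sInt (F i j) fun x => ω x i j)
          = ∑ i, ∑ j, ∑ k ∈ Finset.range (K+1),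
              sInt (F i j) ((D k).indicator fun y => ω y i j) :=
            Finset.sum_congr rfl fun i _ => Finset.sum_congr rfl fun j _ => hsum_eq i j
        _ ≤ _ := Finset.sum_le_sum fun i _ => Finset.sum_le_sum fun j _ =>
              Finset.sum_le_sum fun k _ => hbound i j k
    have step2 : ∑ i, ∑ j, ∑ k ∈ Finset.range (K+1),
          (Mk k i j * F i j (D k) + ε * (vμ (F i j) (D k)).toReal)
        = (∑ k ∈ Finset.range (K+1), ∑ i, ∑ j, Mk k i j * F i j (D k))
          + ∑ i, ∑ j, ∑ k ∈ Finset.range (K+1), ε * (vμ (F i j) (D k)).toReal := by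
      rw [← hswap fun i j k => Mk k i j * F i j (D k)]
      rw [← Finset.sum_add_distrib]
      refine Finset.sum_congr rfl fun i _ => ?_
      rw [← Finset.sum_add_distrib]
      refine Finset.sum_congr rfl fun j _ => ?_
      rw [← Finset.sum_add_distrib]
    have step3 : ∑ i, ∑ j, ∑ k ∈ Finset.range (K+1), ε * (vμ (F i j) (D k)).toReal
        ≤ ε * T := by
      have hpart : ∀ (i : Fin m) (j : Fin n),
          ∑ k ∈ Finset.range (K+1), (vμ (F i j) (D k)).toReal
            ≤ (vμ (F i j) univ).toReal := by
        intro i j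
        rw [← ENNReal.toReal_sum (fun k _ => measure_ne_top _ _)]
        refine ENNReal.toReal_mono (measure_ne_top _ _) ?_
        rw [← measure_biUnion_finset (fun a _ b _ hab => hDdisj hab) (fun k _ => hDmeas k)]
        exact measure_mono (subset_univ _)
      calc ∑ i, ∑ j, ∑ k ∈ Finset.range (K+1), ε * (vμ (F i j) (D k)).toReal
          = ∑ i, ∑ j, ε * ∑ k ∈ Finset.range (K+1), (vμ (F i j) (D k)).toReal := by
            refine Finset.sum_congr rfl fun i _ => Finset.sum_congr rfl fun j _ => ?_
            rw [Finset.mul_sum]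
        _ ≤ ∑ i, ∑ j, ε * (vμ (F i j) univ).toReal :=
            Finset.sum_le_sum fun i _ => Finset.sum_le_sum fun j _ =>
              mul_le_mul_of_nonneg_left (hpart i j) hε.le
        _ = ε * ∑ i, ∑ j, (vμ (F i j) univ).toReal := by
            rw [Finset.mul_sum]
            exact Finset.sum_congr rfl fun i _ => (Finset.mul_sum _ _ _).symm
        _ = ε * T := by rw [sum_toReal_vμ, hT]
    have efrob : ∀ k, (∑ i, ∑ j, Mk k i j * F i j (D k))
        = frob (Mk k) fun i j => F i j (D k) := fun k => rfl
    calc (∑ i, ∑ j, sInt (F i j) fun x => ω x i j)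
        ≤ ∑ i, ∑ j, ∑ k ∈ Finset.range (K+1),
            (Mk k i j * F i j (D k) + ε * (vμ (F i j) (D k)).toReal) := step1
      _ = (∑ k ∈ Finset.range (K+1), ∑ i, ∑ j, Mk k i j * F i j (D k))
          + ∑ i, ∑ j, ∑ k ∈ Finset.range (K+1), ε * (vμ (F i j) (D k)).toReal := step2
      _ ≤ (∑ k ∈ Finset.range (K+1), frob (Mk k) fun i j => F i j (D k)) + ε * T := by
          rw [Finset.sum_congr rfl fun k _ => efrob k]
          linarith [step3]
  have hfrob_le : (∑ k ∈ Finset.range (K+1), frob (Mk k) fun i j => F i j (D k)) ≤ tvH h F := by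
    have h1 : ∀ k ∈ Finset.range (K+1), frob (Mk k) (fun i j => F i j (D k))
        ≤ genNorm h (fun i j => F i j (D k)) :=
      fun k _ => frob_le_genNorm hh hm (hMksub k) _
    have htsum : (∑' k, genNorm h fun i j => F i j (D k))
        = ∑ k ∈ Finset.range (K+1), genNorm h fun i j => F i j (D k) := by
      refine tsum_eq_sum fun k hk => ?_
      have hkK : K < k := by
        simp only [Finset.mem_range, not_lt] at hk
        omega
      have hD0 : D k = ∅ := hDempty k hkK
      have hF0 : (fun i j => F i j (D k)) = (0 : Fin m → Fin n → ℝ) := by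
        funext i j
        rw [hD0]
        simp
      rw [hF0, genNorm_zero hh hm]
    have hmem : (∑' k, genNorm h fun i j => F i j (D k))
        ∈ {r | ∃ B : ℕ → Set (Euc n), (∀ k, MeasurableSet (B k)) ∧
          Pairwise (Function.onFun Disjoint B) ∧ (⋃ k, B k) = Set.univ ∧
          r = ∑' k, genNorm h (fun i j => F i j (B k))} :=
      ⟨D, hDmeas, hDdisj, hDunion, rfl⟩
    calc (∑ k ∈ Finset.range (K+1), frob (Mk k) fun i j => F i j (D k))
        ≤ ∑ k ∈ Finset.range (K+1), genNorm h fun i j => F i j (D k) :=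
          Finset.sum_le_sum h1
      _ = ∑' k, genNorm h fun i j => F i j (D k) := htsum.symm
      _ ≤ tvH h F := le_csSup (tvH_bddAbove hh hm F) hmem
  have hfinal : ε * T ≤ ε' := by
    rw [hεdef, div_mul_eq_mul_div, div_le_iff₀ (by linarith : (0:ℝ) < T + 1)]
    nlinarith
  linarith
end S8
namespace S8
open Metric Function Set MeasureTheory
open scoped ENNReal

variable {m n : ℕ} {h : (Fin m → ℝ) → ℝ}

lemma partB (hh : IsNorm h) (hm : 0 < m) (F : MatMeas m n)
    {B : ℕ → Set (Euc n)} (hBm : ∀ k, MeasurableSet (B k))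
    (hBd : Pairwise (Function.onFun Disjoint B)) (hBu : (⋃ k, B k) = univ)
    {ε : ℝ} (hε : 0 < ε) :
    ∃ ω : Euc n → (Fin m → Fin n → ℝ), ContDiff ℝ (⊤ : ℕ∞) ω ∧ HasCompactSupport ω ∧
      (∀ x, inSubdiffH h (ω x)) ∧
      (∑' k, genNorm h fun i j => F i j (B k)) - ε
        ≤ ∑ i, ∑ j, sInt (F i j) fun x => ω x i j := by
  classical
  set g : ℕ → ℝ := fun k => genNorm h fun i j => F i j (B k) with hg
  obtain ⟨hgsum, -⟩ := summable_g hh hm F hBm hBd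
  -- a large partial sum
  obtain ⟨K, hK⟩ : ∃ K : ℕ, (∑' k, g k) - ε/4 ≤ ∑ k ∈ Finset.range K, g k := by
    have h2 := Metric.tendsto_atTop.1 hgsum.hasSum.tendsto_sum_nat (ε/4) (by positivity)
    obtain ⟨K, hK⟩ := h2
    refine ⟨K, ?_⟩
    have := hK K le_rfl
    rw [Real.dist_eq, abs_sub_lt_iff] at this
    linarith [this.2]
  -- near-optimal matrices
  have hMex : ∀ k, ∃ M : Fin m → Fin n → ℝ, inSubdiffH h M ∧
      g k - ε/(4*(K+1)) ≤ frob M (fun i j => F i j (B k)) := fun k =>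
    exists_near_genNorm hh hm _ (by positivity)
  choose M hMsub hMfrob using hMex
  -- the small parameter
  have hCpos : (0:ℝ) < hC h + 1 := by linarith [hC_nonneg hh]
  set η : ℝ := ε / (8 * (K+1) * (hC h + 1)) with hηdef
  have hη : 0 < η := by
    apply div_pos hε
    positivity
  have hηe : (ENNReal.ofReal η) ≠ 0 := (ENNReal.ofReal_pos.2 hη).ne'
  -- inner compacts
  have hCex : ∀ k, ∃ C, C ⊆ B k ∧ IsCompact C ∧ totalμ F (B k \ C) < ENNReal.ofReal η :=
    fun k => (hBm k).exists_isCompact_diff_lt (measure_ne_top _ _) hηe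
  choose C hCsub hCcpt hCsmall using hCex
  -- outer opens
  have hUex : ∀ k, ∃ U ⊇ C k, IsOpen U ∧ totalμ F U < ⊤ ∧
      totalμ F (U \ C k) < ENNReal.ofReal η := fun k =>
    ((hCcpt k).isClosed.measurableSet).exists_isOpen_diff_lt (measure_ne_top _ _) hηe
  choose U hUsup hUopen hUfin hUsmall using hUex
  -- disjoint thickenings
  have hCdisj : ∀ k l, k ≠ l → Disjoint (C k) (C l) := fun k l hkl =>
    Set.disjoint_of_subset (hCsub k) (hCsub l) (hBd hkl)
  have hdex : ∀ k l : ℕ, ∃ d : ℝ, 0 < d ∧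
      (k ≠ l → Disjoint (Metric.thickening d (C k)) (Metric.thickening d (C l))) := by
    intro k l
    by_cases hkl : k ≠ l
    · obtain ⟨d, hd, hdis⟩ := (hCdisj k l hkl).exists_thickenings (hCcpt k) (hCcpt l).isClosed
      exact ⟨d, hd, fun _ => hdis⟩
    · exact ⟨1, one_pos, fun hc => absurd hc hkl⟩
  choose d hd hddisj using hdex
  obtain ⟨ρ, hρ, hρle⟩ : ∃ ρ : ℝ, 0 < ρ ∧ ∀ k l, k < K → l < K → ρ ≤ d k l := by
    have hne : (insert ((K:ℕ),(K:ℕ)) ((Finset.range K) ×ˢ (Finset.range K))).Nonempty :=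
      ⟨(K,K), Finset.mem_insert_self _ _⟩
    refine ⟨(insert ((K:ℕ),(K:ℕ)) ((Finset.range K) ×ˢ (Finset.range K))).inf' hne
      (fun p => d p.1 p.2), ?_, ?_⟩
    · rw [Finset.lt_inf'_iff]
      exact fun p _ => hd p.1 p.2
    · intro k l hk hl
      exact Finset.inf'_le _ (Finset.mem_insert_of_mem
        (Finset.mk_mem_product (Finset.mem_range.2 hk) (Finset.mem_range.2 hl)))
  set W : ℕ → Set (Euc n) := fun k =>
    if k < K then U k ∩ Metric.thickening ρ (C k) else ∅ with hW
  have hWeq : ∀ k, k < K → W k = U k ∩ Metric.thickening ρ (C k) := fun k hk => by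
    simp [hW, hk]
  have hWempty : ∀ k, ¬ k < K → W k = ∅ := fun k hk => by simp [hW, hk]
  have hWopen : ∀ k, IsOpen (W k) := by
    intro k
    by_cases hk : k < K
    · rw [hWeq k hk]; exact (hUopen k).inter Metric.isOpen_thickening
    · rw [hWempty k hk]; exact isOpen_empty
  have hWC : ∀ k, k < K → C k ⊆ W k := by
    intro k hk
    rw [hWeq k hk]
    exact subset_inter (hUsup k) (Metric.self_subset_thickening hρ _)
  have hWdisj : ∀ k l, k < K → l < K → k ≠ l → Disjoint (W k) (W l) := by
    intro k l hk hl hkl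
    rw [hWeq k hk, hWeq l hl]
    refine Disjoint.mono inter_subset_right inter_subset_right ?_
    exact Disjoint.mono (Metric.thickening_mono (hρle k l hk hl) _)
      (Metric.thickening_mono (hρle k l hk hl) _) (hddisj k l hkl)
  have hWsmall : ∀ k, k < K → totalμ F (W k \ C k) < ENNReal.ofReal η := by
    intro k hk
    refine lt_of_le_of_lt (measure_mono ?_) (hUsmall k)
    rw [hWeq k hk]
    exact diff_subset_diff_left inter_subset_left
  have hWbdd : ∀ k, Bornology.IsBounded (W k) := by
    intro k
    by_cases hk : k < K
    · rw [hWeq k hk]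
      exact ((hCcpt k).isBounded.thickening).subset inter_subset_right
    · rw [hWempty k hk]; exact Bornology.isBounded_empty
  -- smooth bump functions
  have hfex : ∀ k, ∃ f : Euc n → ℝ, ContDiff ℝ (⊤:ℕ∞) f ∧ HasCompactSupport f ∧
      (∀ x ∉ W k, f x = 0) ∧ (k < K → ∀ x ∈ C k, f x = 1) ∧ (∀ x, f x ∈ Icc (0:ℝ) 1) := by
    intro k
    by_cases hk : k < K
    · have hdisj : Disjoint ((W k)ᶜ) (C k) := by
        exact Set.disjoint_left.2 fun x hx hxC => hx (hWC k hk hxC)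
      obtain ⟨f, hfs, hf0, hf1, hficc⟩ :=
        smooth_urysohn (isClosed_compl_iff.2 (hWopen k)) (hCcpt k).isClosed hdisj
      have hsupp : Function.support f ⊆ W k := by
        intro x hx
        by_contra hxW
        exact hx (hf0 hxW)
      have hfc : HasCompactSupport f := by
        have h1 : tsupport f ⊆ closure (W k) := closure_mono hsupp
        have h2 : IsCompact (closure (W k)) :=
          Metric.isCompact_of_isClosed_isBounded isClosed_closure (hWbdd k).closure
        exact h2.of_isClosed_subset (isClosed_tsupport f) h1
      exact ⟨f, hfs, hfc, fun x hx => hf0 hx, fun _ x hx => hf1 hx, hficc⟩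
    · refine ⟨0, contDiff_const, ?_, fun x _ => rfl, fun hkK => absurd hkK hk, fun x => ?_⟩
      · simpa using (HasCompactSupport.zero : HasCompactSupport (fun _ : Euc n => (0:ℝ)))
      · simp [Set.mem_Icc]
  choose f hfs hfc hf0 hf1 hficc using hfex
  -- the test field
  refine ⟨fun x => ∑ k ∈ Finset.range K, f k x • M k, ?_, ?_, ?_, ?_⟩
  · exact ContDiff.sum fun k _ => (hfs k).smul contDiff_const
  · exact hcs_sum _ _ fun k _ => (hfc k).smul_right
  · -- admissibility
    intro x
    show inSubdiffH h (∑ k ∈ Finset.range K, f k x • M k)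
    by_cases hex : ∃ k ∈ Finset.range K, f k x ≠ 0
    · obtain ⟨k0, hk0mem, hk0⟩ := hex
      have hxW : x ∈ W k0 := by
        by_contra hxw
        exact hk0 (hf0 k0 x hxw)
      have he : (∑ k ∈ Finset.range K, f k x • M k) = f k0 x • M k0 := by
        refine Finset.sum_eq_single_of_mem k0 hk0mem fun l hl hne => ?_
        have hfl : f l x = 0 := by
          by_contra hfl
          have hxWl : x ∈ W l := by
            by_contra hxw
            exact hfl (hf0 l x hxw)
          exact (hWdisj l k0 (Finset.mem_range.1 hl) (Finset.mem_range.1 hk0mem) hne).le_bot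
            ⟨hxWl, hxW⟩
        rw [hfl, zero_smul]
      rw [he]
      exact inSubdiffH_smul hh hm (hficc k0 x).1 (hficc k0 x).2 (hMsub k0)
    · push_neg at hex
      have he : (∑ k ∈ Finset.range K, f k x • M k) = 0 := by
        refine Finset.sum_eq_zero fun k hk => ?_
        rw [hex k hk, zero_smul]
      rw [he]
      exact inSubdiffH_zero hh
  · -- the value estimate
    set E : ℕ → Set (Euc n) := fun k => (B k \ C k) ∪ (W k \ C k) with hE
    have hEmeas : ∀ k, MeasurableSet (E k) :=
      fun k => ((hBm k).diff (hCcpt k).isClosed.measurableSet).union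
        ((hWopen k).measurableSet.diff (hCcpt k).isClosed.measurableSet)
    have hEsmall : ∀ k, k < K → (totalμ F (E k)).toReal ≤ 2 * η := by
      intro k hk
      have h1 : totalμ F (E k) ≤ totalμ F (B k \ C k) + totalμ F (W k \ C k) :=
        measure_union_le _ _
      have h2 : totalμ F (E k) ≤ ENNReal.ofReal η + ENNReal.ofReal η :=
        le_trans h1 (add_le_add (hCsmall k).le (hWsmall k hk).le)
      rw [← ENNReal.ofReal_add hη.le hη.le] at h2
      have := ENNReal.toReal_le_of_le_ofReal (by linarith : (0:ℝ) ≤ η + η) h2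
      linarith
    have hfint : ∀ k (ν : SignedMeasure (Euc n)), Integrable (f k) (vμ ν) :=
      fun k ν => (hfs k).continuous.integrable_of_hasCompactSupport (hfc k)
    have hclose : ∀ (i : Fin m) (j : Fin n) (k : ℕ), k < K →
        |sInt (F i j) (f k) - F i j (B k)| ≤ (vμ (F i j) (E k)).toReal := by
      intro i j k hk
      have hint2 : Integrable ((B k).indicator fun _ => (1:ℝ)) (vμ (F i j)) :=
        (integrable_const _).indicator (hBm k)
      have e1 : sInt (F i j) (f k) - F i j (B k)
          = sInt (F i j) (fun x => f k x - (B k).indicator (fun _ => (1:ℝ)) x) := by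
        rw [sInt_sub _ (hfint k _) hint2, sInt_indicator _ (hBm k)]
      rw [e1]
      refine le_trans (abs_sInt_le _ ((hfint k _).sub hint2)) ?_
      have := integral_abs_le_of_le_indicator (c := (1:ℝ)) (hEmeas k)
        ((hfint k (F i j)).sub hint2) ?_
      · simpa using this
      · intro x
        show |f k x - (B k).indicator (fun _ => (1:ℝ)) x| ≤ (E k).indicator (fun _ => (1:ℝ)) x
        by_cases hxC : x ∈ C k
        · have hfx : f k x = 1 := hf1 k hk x hxC
          have hxB : x ∈ B k := hCsub k hxC
          rw [hfx, indicator_of_mem hxB]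
          simp only [sub_self, abs_zero]
          exact Set.indicator_nonneg (fun _ _ => zero_le_one) x
        · by_cases hxE : x ∈ E k
          · rw [indicator_of_mem hxE]
            have h1 := (hficc k x).1
            have h2 := (hficc k x).2
            by_cases hxB : x ∈ B k
            · rw [indicator_of_mem hxB]
              rw [abs_sub_le_iff]
              constructor <;> linarith
            · rw [indicator_of_notMem hxB]
              rw [sub_zero, abs_of_nonneg h1]
              exact h2
          · have hxB : x ∉ B k := fun hxB => hxE (Or.inl ⟨hxB, hxC⟩)
            have hxW : x ∉ W k := fun hxW => hxE (Or.inr ⟨hxW, hxC⟩)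
            rw [hf0 k x hxW, indicator_of_notMem hxB, indicator_of_notMem hxE]
            simp
    -- compute the integral of ω
    have hval : ∀ (i : Fin m) (j : Fin n),
        sInt (F i j) (fun x => (∑ k ∈ Finset.range K, f k x • M k) i j)
          = ∑ k ∈ Finset.range K, M k i j * sInt (F i j) (f k) := by
      intro i j
      have e : (fun x => (∑ k ∈ Finset.range K, f k x • M k) i j)
          = ∑ k ∈ Finset.range K, (fun x => M k i j * f k x) := by
        funext x
        rw [Finset.sum_apply]
        simp only [Finset.sum_apply, Pi.smul_apply, smul_eq_mul]
        exact Finset.sum_congr rfl fun k _ => mul_comm _ _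
      have hss := sInt_sum (Finset.range K) (F i j) (fun k x => M k i j * f k x)
        (fun k _ => (hfint k (F i j)).const_mul _)
      rw [← (Finset.sum_congr rfl fun k _ => sInt_const_mul (F i j) (M k i j) (f k)), ← hss]
      exact congrArg (sInt (F i j)) e
    -- lower bound
    have hlow : ∀ k, k < K → ∑ i, ∑ j, M k i j * sInt (F i j) (f k)
        ≥ frob (M k) (fun i j => F i j (B k)) - hC h * (2 * η) := by
      intro k hk
      have hterm : ∀ (i : Fin m) (j : Fin n),
          M k i j * sInt (F i j) (f k) - M k i j * F i j (B k)
            ≥ -(hC h * (vμ (F i j) (E k)).toReal) := by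
        intro i j
        have h1 : |M k i j * sInt (F i j) (f k) - M k i j * F i j (B k)|
            ≤ hC h * (vμ (F i j) (E k)).toReal := by
          rw [← mul_sub, abs_mul]
          exact mul_le_mul (entry_bound hh hm (hMsub k) i j) (hclose i j k hk)
            (abs_nonneg _) (hC_nonneg hh)
        linarith [neg_abs_le (M k i j * sInt (F i j) (f k) - M k i j * F i j (B k)), h1]
      have hsum : ∑ i, ∑ j, (M k i j * sInt (F i j) (f k) - M k i j * F i j (B k))
          ≥ ∑ i, ∑ j, -(hC h * (vμ (F i j) (E k)).toReal) :=
        Finset.sum_le_sum fun i _ => Finset.sum_le_sum fun j _ => hterm i j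
      have e2 : ∑ i, ∑ j, -(hC h * (vμ (F i j) (E k)).toReal)
          = -(hC h * (totalμ F (E k)).toReal) := by
        rw [← sum_toReal_vμ F (E k)]
        rw [Finset.mul_sum, ← Finset.sum_neg_distrib]
        refine Finset.sum_congr rfl fun i _ => ?_
        rw [Finset.mul_sum, ← Finset.sum_neg_distrib]
      have e3 : ∑ i, ∑ j, (M k i j * sInt (F i j) (f k) - M k i j * F i j (B k))
          = (∑ i, ∑ j, M k i j * sInt (F i j) (f k)) - frob (M k) fun i j => F i j (B k) := by
        rw [frob, ← Finset.sum_sub_distrib]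
        refine Finset.sum_congr rfl fun i _ => ?_
        rw [← Finset.sum_sub_distrib]
      have e4 : hC h * (totalμ F (E k)).toReal ≤ hC h * (2 * η) :=
        mul_le_mul_of_nonneg_left (hEsmall k hk) (hC_nonneg hh)
      rw [e3, e2] at hsum
      linarith
    -- final chain
    have hswap2 : ∑ i, ∑ j, ∑ k ∈ Finset.range K, M k i j * sInt (F i j) (f k)
        = ∑ k ∈ Finset.range K, ∑ i, ∑ j, M k i j * sInt (F i j) (f k) := by
      calc ∑ i, ∑ j, ∑ k ∈ Finset.range K, M k i j * sInt (F i j) (f k)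
          = ∑ i, ∑ k ∈ Finset.range K, ∑ j, M k i j * sInt (F i j) (f k) :=
            Finset.sum_congr rfl fun i _ => Finset.sum_comm
        _ = _ := Finset.sum_comm
    have hchain : ∑ i, ∑ j, sInt (F i j) (fun x => (∑ k ∈ Finset.range K, f k x • M k) i j)
        ≥ (∑ k ∈ Finset.range K, g k) - (K:ℝ) * (ε/(4*(K+1))) - (K:ℝ) * (hC h * (2*η)) := by
      have e5 : ∑ i, ∑ j, sInt (F i j) (fun x => (∑ k ∈ Finset.range K, f k x • M k) i j)
          = ∑ k ∈ Finset.range K, ∑ i, ∑ j, M k i j * sInt (F i j) (f k) := by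
        rw [← hswap2]
        exact Finset.sum_congr rfl fun i _ => Finset.sum_congr rfl fun j _ => hval i j
      rw [e5]
      have hlow2 : ∀ k ∈ Finset.range K, ∑ i, ∑ j, M k i j * sInt (F i j) (f k)
          ≥ g k - ε/(4*(K+1)) - hC h * (2*η) := by
        intro k hk
        have h1 := hlow k (Finset.mem_range.1 hk)
        have h2 := hMfrob k
        linarith
      calc ∑ k ∈ Finset.range K, ∑ i, ∑ j, M k i j * sInt (F i j) (f k)
          ≥ ∑ k ∈ Finset.range K, (g k - ε/(4*(K+1)) - hC h * (2*η)) :=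
            Finset.sum_le_sum hlow2
        _ = (∑ k ∈ Finset.range K, g k) - (K:ℝ) * (ε/(4*(K+1))) - (K:ℝ) * (hC h * (2*η)) := by
            rw [Finset.sum_sub_distrib, Finset.sum_sub_distrib]
            simp [Finset.sum_const, Finset.card_range]
    have hb1 : (K:ℝ) * (ε/(4*(K+1))) ≤ ε/4 := by
      have hK1 : (0:ℝ) < 4*((K:ℝ)+1) := by positivity
      rw [mul_div_assoc', div_le_div_iff₀ hK1 (by norm_num : (0:ℝ) < 4)]
      have hKnn : (0:ℝ) ≤ (K:ℝ) := Nat.cast_nonneg K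
      nlinarith [hε.le]
    have hb2 : (K:ℝ) * (hC h * (2*η)) ≤ ε/4 := by
      have hηid : η * (8 * (K+1) * (hC h + 1)) = ε := by
        rw [hηdef]
        field_simp
      have hKnn : (0:ℝ) ≤ (K:ℝ) := Nat.cast_nonneg K
      have hCnn := hC_nonneg hh
      nlinarith [mul_le_mul_of_nonneg_right
        (show (K:ℝ) * hC h * 2 ≤ ((K:ℝ)+1) * (hC h + 1) * 2 by nlinarith) hη.le]
    linarith [hK, hchain, hb1, hb2]

end S8
/-- the Federer–Fleming `h`-mass of a finite `ℝ^{m×n}`-valued measure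
(supremum of `∫ ω : dF` over smooth compactly supported `ω` of `h`-comass at most 1)
equals the total variation `|F|_H`. -/
theorem statement8 {m n : ℕ} (hm : 0 < m) (hn : 0 < n)
    (h : (Fin m → ℝ) → ℝ) (hh : IsNorm h)
    (F : MatMeas m n) :
    sSup {r | ∃ ω : Euc n → (Fin m → Fin n → ℝ), ContDiff ℝ (⊤ : ℕ∞) ω ∧
      HasCompactSupport ω ∧ (∀ x, inSubdiffH h (ω x)) ∧
      r = ∑ i, ∑ j, sInt (F i j) fun x => ω x i j} = tvH h F := by
  apply le_antisymm
  · refine csSup_le (S8.ff_set_nonempty hh F) ?_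
    rintro r ⟨ω, hs, hc, ha, rfl⟩
    exact S8.partA hh hm F ω hs hc ha
  · rw [tvH]
    refine csSup_le (S8.tvH_set_nonempty hh F) ?_
    rintro r ⟨B, hBm, hBd, hBu, rfl⟩
    refine le_of_forall_pos_le_add fun ε hε => ?_
    obtain ⟨ω, hs, hc, ha, hge⟩ := S8.partB hh hm F hBm hBd hBu hε
    have hmem : (∑ i, ∑ j, sInt (F i j) fun x => ω x i j)
        ∈ {r | ∃ ω : Euc n → (Fin m → Fin n → ℝ), ContDiff ℝ (⊤ : ℕ∞) ω ∧
          HasCompactSupport ω ∧ (∀ x, inSubdiffH h (ω x)) ∧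
          r = ∑ i, ∑ j, sInt (F i j) fun x => ω x i j} := ⟨ω, hs, hc, ha, rfl⟩
    have hle := le_csSup (S8.ff_bddAbove hh hm F) hmem
    linarith
end
end

section
/- Let m, n be positive integers and h a norm on ℝ^m with generated norm H on ℝ^{m×n}. Let F_0 be a compactly supported finite ℝ^m-valued Borel measure on ℝ^n, F a compactly supported finite ℝ^{m×n}-valued Borel measure with ∂F = F_0, and φ : ℝ^n → ℝ^m an admissible dual potential such that |F|_H = ∫ φ · dF_0 (so that Dφ is a calibration for F). Then F minimizes |·|_H among all compactly supported finite ℝ^{m×n}-valued Borel measures G with ∂G = F_0, and φ maximizes ψ ↦ ∫ ψ · dF_0 among all admissible dual potentials ψ. -/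
open MeasureTheory

noncomputable section

section S9prelude
open MeasureTheory Metric Filter Convolution

namespace S9
variable {m : ℕ} {h : (Fin m → ℝ) → ℝ}

lemma h_zero (hh : IsNorm h) : h 0 = 0 := by
  have := hh.2.1 0 0; simpa using this

lemma h_nonneg (hh : IsNorm h) (x : Fin m → ℝ) : 0 ≤ h x := by
  have h1 := hh.1 x (-x)
  have h2 : h (-x) = h x := by
    have := hh.2.1 (-1) x; simpa using this
  have h3 : h (x + -x) = 0 := by simpa using h_zero hh
  nlinarith [h1, h2, h3]

lemma h_neg (hh : IsNorm h) (x : Fin m → ℝ) : h (-x) = h x := by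
  have := hh.2.1 (-1) x; simpa using this

lemma h_le_sum (hh : IsNorm h) (v : Fin m → ℝ) :
    h v ≤ ∑ i, |v i| * h (Pi.single i 1) := by
  have hv : v = ∑ i, (v i) • (Pi.single i 1 : Fin m → ℝ) := by
    funext a
    simp [Finset.sum_apply, Pi.single_apply, mul_comm]
  calc h v = h (∑ i, (v i) • (Pi.single i 1 : Fin m → ℝ)) := by rw [← hv]
    _ ≤ ∑ i, h ((v i) • (Pi.single i 1 : Fin m → ℝ)) :=
        Finset.le_sum_of_subadditive h (h_zero hh).le hh.1 _ _
    _ = ∑ i, |v i| * h (Pi.single i 1) := by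
        refine Finset.sum_congr rfl fun i _ => hh.2.1 _ _

lemma h_cont (hh : IsNorm h) : Continuous h := by
  have key : ∀ x y : Fin m → ℝ, |h x - h y| ≤ (∑ i : Fin m, h (Pi.single i 1)) * ‖x - y‖ := by
    intro x y
    have hxy : h (x - y) ≤ (∑ i : Fin m, h (Pi.single i 1)) * ‖x - y‖ := by
      calc h (x - y) ≤ ∑ i, |(x - y) i| * h (Pi.single i 1) := h_le_sum hh _
        _ ≤ ∑ i : Fin m, ‖x - y‖ * h (Pi.single i 1) := by
            refine Finset.sum_le_sum fun i _ => ?_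
            have h1 : |(x - y) i| ≤ ‖x - y‖ := by
              simpa using norm_le_pi_norm (x - y) i
            exact mul_le_mul_of_nonneg_right h1 (h_nonneg hh _)
        _ = (∑ i : Fin m, h (Pi.single i 1)) * ‖x - y‖ := by
            rw [Finset.sum_mul]; exact Finset.sum_congr rfl fun i _ => mul_comm _ _
    have h1 : h x ≤ h y + h (x - y) := by
      have := hh.1 (x - y) y; simp only [sub_add_cancel] at this; linarith
    have h2 : h y ≤ h x + h (x - y) := by
      have := hh.1 (y - x) x
      have e : h (y - x) = h (x - y) := by
        rw [show y - x = -(x - y) by ring, h_neg hh]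
      simp only [sub_add_cancel] at this; linarith
    rw [abs_sub_le_iff]; constructor <;> linarith
  rw [Metric.continuous_iff]
  intro b ε hε
  set C := ∑ i : Fin m, h (Pi.single i 1)
  have hC : 0 ≤ C := Finset.sum_nonneg fun i _ => h_nonneg hh _
  refine ⟨ε / (C + 1), by positivity, fun a ha => ?_⟩
  have := key a b
  rw [Real.dist_eq]
  calc |h a - h b| ≤ C * ‖a - b‖ := this
    _ ≤ C * dist a b := by rw [dist_eq_norm]
    _ < ε := by
        have hd : dist a b < ε / (C + 1) := ha
        have hd0 : 0 ≤ dist a b := dist_nonneg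
        have h1 : C * dist a b ≤ C * (ε / (C + 1)) := mul_le_mul_of_nonneg_left hd.le hC
        have h2 : C * (ε / (C + 1)) < ε := by
          rw [mul_div_assoc'] at *
          rw [div_lt_iff₀ (by positivity)]; nlinarith
        linarith

lemma exists_lb (hm : 0 < m) (hh : IsNorm h) : ∃ a : ℝ, 0 < a ∧ ∀ θ, a * ‖θ‖ ≤ h θ := by
  haveI : Nontrivial (Fin m → ℝ) := by
    refine ⟨Pi.single ⟨0, hm⟩ 1, 0, fun hc => ?_⟩
    have := congrFun hc ⟨0, hm⟩; simp at this
  have hcsph : IsCompact (sphere (0 : Fin m → ℝ) 1) := isCompact_sphere _ _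
  have hne : (sphere (0 : Fin m → ℝ) 1).Nonempty := by
    obtain ⟨x, hx⟩ := exists_norm_eq (Fin m → ℝ) (zero_le_one (α := ℝ))
    exact ⟨x, by simpa [mem_sphere_iff_norm] using hx⟩
  obtain ⟨θ0, hθ0s, hmin⟩ := hcsph.exists_isMinOn hne ((h_cont hh).continuousOn)
  have hn0 : θ0 ≠ 0 := by
    intro hc; rw [mem_sphere_iff_norm, hc] at hθ0s; simp at hθ0s
  have ha : 0 < h θ0 := lt_of_le_of_ne (h_nonneg hh _) (fun hc => hn0 (hh.2.2 _ hc.symm))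
  refine ⟨h θ0, ha, fun θ => ?_⟩
  rcases eq_or_ne θ 0 with rfl | hθ
  · simp [h_zero hh]
  · have hnθ : 0 < ‖θ‖ := norm_pos_iff.2 hθ
    have hmem : ‖θ‖⁻¹ • θ ∈ sphere (0 : Fin m → ℝ) 1 := by
      simp [norm_smul, abs_of_pos (inv_pos.2 hnθ), inv_mul_cancel₀ hnθ.ne']
    have hmm : h θ0 ≤ h (‖θ‖⁻¹ • θ) := hmin hmem
    have he : h (‖θ‖⁻¹ • θ) = ‖θ‖⁻¹ * h θ := by
      rw [hh.2.1]; congr 1; rw [abs_of_pos (inv_pos.2 hnθ)]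
    rw [he] at hmm
    calc h θ0 * ‖θ‖ ≤ (‖θ‖⁻¹ * h θ) * ‖θ‖ :=
      mul_le_mul_of_nonneg_right hmm hnθ.le
      _ = h θ := by field_simp

end S9
variable {m : ℕ} {h : (Fin m → ℝ) → ℝ}
namespace S9

def dS (h : (Fin m → ℝ) → ℝ) (g : Fin m → ℝ) : Set ℝ :=
  {r | ∃ θ : Fin m → ℝ, h θ ≤ 1 ∧ r = ∑ i, g i * θ i}

lemma dS_nonempty (hh : IsNorm h) (g : Fin m → ℝ) : (dS h g).Nonempty :=
  ⟨0, 0, by simp [h_zero hh]⟩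

lemma dS_bdd (hm : 0 < m) (hh : IsNorm h) {a : ℝ} (ha : 0 < a)
    (hlb : ∀ θ, a * ‖θ‖ ≤ h θ) (g : Fin m → ℝ) :
    ∀ r ∈ dS h g, r ≤ (∑ i, |g i|) / a := by
  rintro r ⟨θ, hθ, rfl⟩
  have hθn : ‖θ‖ ≤ 1 / a := by
    have := hlb θ
    rw [le_div_iff₀ ha, mul_comm]; linarith
  calc ∑ i, g i * θ i ≤ ∑ i, |g i| * (1 / a) := by
        refine Finset.sum_le_sum fun i _ => ?_
        calc g i * θ i ≤ |g i * θ i| := le_abs_self _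
          _ = |g i| * |θ i| := abs_mul _ _
          _ ≤ |g i| * (1 / a) := by
              refine mul_le_mul_of_nonneg_left ?_ (abs_nonneg _)
              exact le_trans (by simpa using norm_le_pi_norm θ i) hθn
    _ = (∑ i, |g i|) / a := by rw [← Finset.sum_mul]; ring

lemma dn_bddAbove (hm : 0 < m) (hh : IsNorm h) {a : ℝ} (ha : 0 < a)
    (hlb : ∀ θ, a * ‖θ‖ ≤ h θ) (g : Fin m → ℝ) : BddAbove (dS h g) :=
  ⟨_, dS_bdd hm hh ha hlb g⟩

lemma dn_dot (hm : 0 < m) (hh : IsNorm h) {a : ℝ} (ha : 0 < a)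
    (hlb : ∀ θ, a * ‖θ‖ ≤ h θ) (g θ : Fin m → ℝ) (hθ : h θ ≤ 1) :
    ∑ i, g i * θ i ≤ dualNorm h g :=
  le_csSup (dn_bddAbove hm hh ha hlb g) ⟨θ, hθ, rfl⟩

lemma dn_le (hh : IsNorm h) {g : Fin m → ℝ} {c : ℝ}
    (hc : ∀ θ, h θ ≤ 1 → ∑ i, g i * θ i ≤ c) : dualNorm h g ≤ c := by
  refine csSup_le (dS_nonempty hh g) ?_
  rintro r ⟨θ, hθ, rfl⟩; exact hc θ hθ

lemma dn_nonneg (hm : 0 < m) (hh : IsNorm h) {a : ℝ} (ha : 0 < a)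
    (hlb : ∀ θ, a * ‖θ‖ ≤ h θ) (g : Fin m → ℝ) : 0 ≤ dualNorm h g := by
  have := dn_dot hm hh ha hlb g 0 (by simp [h_zero hh])
  simpa using this

lemma dn_mul (hm : 0 < m) (hh : IsNorm h) {a : ℝ} (ha : 0 < a)
    (hlb : ∀ θ, a * ‖θ‖ ≤ h θ) (g θ : Fin m → ℝ) :
    ∑ i, g i * θ i ≤ dualNorm h g * h θ := by
  rcases eq_or_lt_of_le (h_nonneg hh θ) with hz | hp
  · have : θ = 0 := hh.2.2 _ hz.symm
    subst this; simp [h_zero hh]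
  · have hmem : h ((h θ)⁻¹ • θ) ≤ 1 := by
      rw [hh.2.1, abs_of_pos (inv_pos.2 hp), inv_mul_cancel₀ hp.ne']
    have := dn_dot hm hh ha hlb g _ hmem
    have he : ∑ i, g i * ((h θ)⁻¹ • θ) i = (h θ)⁻¹ * ∑ i, g i * θ i := by
      rw [Finset.mul_sum]; exact Finset.sum_congr rfl fun i _ => by
        simp [Pi.smul_apply]; ring
    rw [he] at this
    have := mul_le_mul_of_nonneg_right this hp.le
    calc ∑ i, g i * θ i = ((h θ)⁻¹ * ∑ i, g i * θ i) * h θ := by field_simp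
      _ ≤ dualNorm h g * h θ := this

lemma dn_coord (hm : 0 < m) (hh : IsNorm h) {a : ℝ} (ha : 0 < a)
    (hlb : ∀ θ, a * ‖θ‖ ≤ h θ) (g : Fin m → ℝ) (i : Fin m) :
    |g i| ≤ h (Pi.single i 1) * dualNorm h g := by
  have h1 := dn_mul hm hh ha hlb g (Pi.single i 1)
  have h2 := dn_mul hm hh ha hlb g (-Pi.single i 1)
  have e1 : ∑ j, g j * (Pi.single i 1 : Fin m → ℝ) j = g i := by
    simp [Pi.single_apply, mul_comm]
  have e2 : ∑ j, g j * (-Pi.single i 1 : Fin m → ℝ) j = -g i := by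
    simp [Pi.single_apply, mul_comm]
  have e3 : h (-Pi.single i 1 : Fin m → ℝ) = h (Pi.single i 1) := h_neg hh _
  rw [e1] at h1; rw [e2, e3] at h2
  rw [abs_le]; constructor <;> nlinarith [mul_comm (dualNorm h g) (h (Pi.single i 1))]

lemma dn_ub (hm : 0 < m) (hh : IsNorm h) {a : ℝ} (ha : 0 < a)
    (hlb : ∀ θ, a * ‖θ‖ ≤ h θ) (g : Fin m → ℝ) :
    dualNorm h g ≤ (∑ i, |g i|) / a :=
  csSup_le (dS_nonempty hh g) (dS_bdd hm hh ha hlb g)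

lemma dn_add (hm : 0 < m) (hh : IsNorm h) {a : ℝ} (ha : 0 < a)
    (hlb : ∀ θ, a * ‖θ‖ ≤ h θ) (g₁ g₂ : Fin m → ℝ) :
    dualNorm h (g₁ + g₂) ≤ dualNorm h g₁ + dualNorm h g₂ := by
  refine dn_le hh fun θ hθ => ?_
  have : ∑ i, (g₁ + g₂) i * θ i = (∑ i, g₁ i * θ i) + ∑ i, g₂ i * θ i := by
    rw [← Finset.sum_add_distrib]; exact Finset.sum_congr rfl fun i _ => by
      simp [add_mul]
  rw [this]
  exact add_le_add (dn_dot hm hh ha hlb g₁ θ hθ) (dn_dot hm hh ha hlb g₂ θ hθ)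

lemma dn_smul_le (hm : 0 < m) (hh : IsNorm h) {a : ℝ} (ha : 0 < a)
    (hlb : ∀ θ, a * ‖θ‖ ≤ h θ) (c : ℝ) (g : Fin m → ℝ) :
    dualNorm h (c • g) ≤ |c| * dualNorm h g := by
  refine dn_le hh fun θ hθ => ?_
  have e : ∑ i, (c • g) i * θ i = ∑ i, g i * (c • θ) i := by
    exact Finset.sum_congr rfl fun i _ => by simp; ring
  rw [e]
  calc ∑ i, g i * (c • θ) i ≤ dualNorm h g * h (c • θ) := dn_mul hm hh ha hlb g _
    _ = dualNorm h g * (|c| * h θ) := by rw [hh.2.1]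
    _ ≤ dualNorm h g * (|c| * 1) := by
        refine mul_le_mul_of_nonneg_left ?_ (dn_nonneg hm hh ha hlb g)
        exact mul_le_mul_of_nonneg_left hθ (abs_nonneg c)
    _ = |c| * dualNorm h g := by ring

lemma dn_cont (hm : 0 < m) (hh : IsNorm h) {a : ℝ} (ha : 0 < a)
    (hlb : ∀ θ, a * ‖θ‖ ≤ h θ) : Continuous (dualNorm h) := by
  have key : ∀ g₁ g₂ : Fin m → ℝ,
      |dualNorm h g₁ - dualNorm h g₂| ≤ ((m : ℝ) / a) * ‖g₁ - g₂‖ := by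
    have half : ∀ g₁ g₂ : Fin m → ℝ,
        dualNorm h g₁ - dualNorm h g₂ ≤ ((m : ℝ) / a) * ‖g₁ - g₂‖ := by
      intro g₁ g₂
      have h1 : dualNorm h g₁ ≤ dualNorm h g₂ + dualNorm h (g₁ - g₂) := by
        have := dn_add hm hh ha hlb g₂ (g₁ - g₂)
        simpa using this
      have h2 : dualNorm h (g₁ - g₂) ≤ (∑ i, |(g₁ - g₂) i|) / a :=
        dn_ub hm hh ha hlb _
      have h3 : (∑ i, |(g₁ - g₂) i|) ≤ (m : ℝ) * ‖g₁ - g₂‖ := by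
        calc (∑ i, |(g₁ - g₂) i|) ≤ ∑ _i : Fin m, ‖g₁ - g₂‖ :=
            Finset.sum_le_sum fun i _ => by simpa using norm_le_pi_norm (g₁ - g₂) i
          _ = (m : ℝ) * ‖g₁ - g₂‖ := by simp [Finset.sum_const, nsmul_eq_mul]
      have h4 : (∑ i, |(g₁ - g₂) i|) / a ≤ (m : ℝ) / a * ‖g₁ - g₂‖ := by
        rw [div_mul_eq_mul_div, div_le_div_iff_of_pos_right ha]
        exact h3
      linarith
    intro g₁ g₂
    rw [abs_sub_le_iff]
    refine ⟨half g₁ g₂, ?_⟩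
    have := half g₂ g₁
    rwa [show g₂ - g₁ = -(g₁ - g₂) by ring, norm_neg] at this
  rw [Metric.continuous_iff]
  intro g ε hε
  set C := (m : ℝ) / a with hC
  have hC0 : 0 ≤ C := by positivity
  refine ⟨ε / (C + 1), by positivity, fun g' hg' => ?_⟩
  rw [Real.dist_eq]
  calc |dualNorm h g' - dualNorm h g| ≤ C * ‖g' - g‖ := key g' g
    _ = C * dist g' g := by rw [dist_eq_norm]
    _ ≤ C * (ε / (C + 1)) := mul_le_mul_of_nonneg_left (le_of_lt hg') hC0
    _ < ε := by rw [mul_div_assoc', div_lt_iff₀ (by positivity)]; nlinarith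

end S9
open MeasureTheory
namespace S9
variable {n : ℕ}

abbrev pos {n : ℕ} (ν : SignedMeasure (Euc n)) : Measure (Euc n) :=
  ν.toJordanDecomposition.posPart
abbrev neg {n : ℕ} (ν : SignedMeasure (Euc n)) : Measure (Euc n) :=
  ν.toJordanDecomposition.negPart

lemma jordan_apply (ν : SignedMeasure (Euc n)) {B : Set (Euc n)} (hB : MeasurableSet B) :
    ν B = (pos ν B).toReal - (neg ν B).toReal := by
  conv_lhs => rw [← ν.toSignedMeasure_toJordanDecomposition]
  rw [JordanDecomposition.toSignedMeasure, MeasureTheory.VectorMeasure.sub_apply,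
    Measure.toSignedMeasure_apply_measurable hB, Measure.toSignedMeasure_apply_measurable hB]
  rfl

lemma supp_parts {ν : SignedMeasure (Euc n)} {K : Set (Euc n)} (hK : MeasurableSet K)
    (hs : ∀ B : Set (Euc n), MeasurableSet B → Disjoint B K → ν B = 0) :
    pos ν Kᶜ = 0 ∧ neg ν Kᶜ = 0 := by
  obtain ⟨S, hS, hpS, hnS⟩ := ν.toJordanDecomposition.mutuallySingular
  have key : ∀ B : Set (Euc n), MeasurableSet B → Disjoint B K →
      (pos ν B).toReal = (neg ν B).toReal := by
    intro B hB hd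
    have := jordan_apply ν hB
    rw [hs B hB hd] at this; linarith [this]
  constructor
  · have h1 : pos ν (Kᶜ ∩ S) = 0 := le_antisymm (le_trans (measure_mono Set.inter_subset_right) hpS.le) bot_le
    have h2 : pos ν (Kᶜ ∩ Sᶜ) = 0 := by
      have hd : Disjoint (Kᶜ ∩ Sᶜ) K := Set.disjoint_left.2 fun x hx => hx.1
      have := key _ ((hK.compl).inter hS.compl) hd
      have hn : neg ν (Kᶜ ∩ Sᶜ) = 0 :=
        le_antisymm (le_trans (measure_mono Set.inter_subset_right) hnS.le) bot_le
      rw [hn] at this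
      simp only [ENNReal.toReal_zero] at this
      have hfin : pos ν (Kᶜ ∩ Sᶜ) ≠ ⊤ := measure_ne_top _ _
      exact (ENNReal.toReal_eq_zero_iff _).1 this |>.resolve_right hfin
    have : pos ν Kᶜ ≤ pos ν (Kᶜ ∩ S) + pos ν (Kᶜ ∩ Sᶜ) := by
      calc _ = _ := by rw [← Set.inter_union_distrib_left, Set.union_compl_self, Set.inter_univ]
        _ ≤ _ := measure_union_le _ _
    simpa [h1, h2] using this
  · have h1 : neg ν (Kᶜ ∩ Sᶜ) = 0 := le_antisymm (le_trans (measure_mono Set.inter_subset_right) hnS.le) bot_le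
    have h2 : neg ν (Kᶜ ∩ S) = 0 := by
      have hd : Disjoint (Kᶜ ∩ S) K := Set.disjoint_left.2 fun x hx => hx.1
      have := key _ ((hK.compl).inter hS) hd
      have hp : pos ν (Kᶜ ∩ S) = 0 :=
        le_antisymm (le_trans (measure_mono Set.inter_subset_right) hpS.le) bot_le
      rw [hp] at this
      simp only [ENNReal.toReal_zero] at this
      have hfin : neg ν (Kᶜ ∩ S) ≠ ⊤ := measure_ne_top _ _
      exact (ENNReal.toReal_eq_zero_iff _).1 this.symm |>.resolve_right hfin
    have : neg ν Kᶜ ≤ neg ν (Kᶜ ∩ S) + neg ν (Kᶜ ∩ Sᶜ) := by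
      calc _ = _ := by rw [← Set.inter_union_distrib_left, Set.union_compl_self, Set.inter_univ]
        _ ≤ _ := measure_union_le _ _
    simpa [h1, h2] using this

lemma restrict_eq {μ : Measure (Euc n)} {K : Set (Euc n)}
    (h0 : μ Kᶜ = 0) : μ.restrict K = μ :=
  Measure.restrict_eq_self_of_ae_mem (by
    rw [MeasureTheory.ae_iff]; exact h0)

lemma integrable_of_cont {μ : Measure (Euc n)} [IsFiniteMeasure μ] {K : Set (Euc n)}
    (hK : IsCompact K) (h0 : μ Kᶜ = 0) {f : Euc n → ℝ} (hf : Continuous f) :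
    Integrable f μ := by
  rw [← restrict_eq h0]
  exact ContinuousOn.integrableOn_compact hK hf.continuousOn

lemma integral_congr_on {μ : Measure (Euc n)} {K : Set (Euc n)}
    (h0 : μ Kᶜ = 0) {f g : Euc n → ℝ} (hfg : ∀ x ∈ K, f x = g x) :
    ∫ x, f x ∂μ = ∫ x, g x ∂μ := by
  refine integral_congr_ae ?_
  rw [Filter.EventuallyEq, MeasureTheory.ae_iff]
  refine measure_mono_null (fun x hx => ?_) h0
  simp only [Set.mem_setOf_eq] at hx
  intro hxK
  exact hx (hfg x hxK)

lemma sInt_congr {ν : SignedMeasure (Euc n)} {K : Set (Euc n)} (hK : MeasurableSet K)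
    (hs : ∀ B : Set (Euc n), MeasurableSet B → Disjoint B K → ν B = 0)
    {f g : Euc n → ℝ} (hfg : ∀ x ∈ K, f x = g x) : sInt ν f = sInt ν g := by
  obtain ⟨hp, hn⟩ := supp_parts hK hs
  unfold sInt
  rw [integral_congr_on hp hfg, integral_congr_on hn hfg]

lemma sInt_bound {ν : SignedMeasure (Euc n)} {K : Set (Euc n)} (hKm : MeasurableSet K)
    (hK : IsCompact K)
    (hs : ∀ B : Set (Euc n), MeasurableSet B → Disjoint B K → ν B = 0)
    {f g : Euc n → ℝ} (hf : Continuous f) (hg : Continuous g) {c : ℝ}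
    (hfg : ∀ x, |f x - g x| ≤ c) :
    sInt ν f ≤ sInt ν g + c * ((pos ν Set.univ).toReal + (neg ν Set.univ).toReal) := by
  obtain ⟨hp, hn⟩ := supp_parts hKm hs
  have hif : Integrable f (pos ν) := integrable_of_cont hK hp hf
  have hig : Integrable g (pos ν) := integrable_of_cont hK hp hg
  have hif' : Integrable f (neg ν) := integrable_of_cont hK hn hf
  have hig' : Integrable g (neg ν) := integrable_of_cont hK hn hg
  have key : ∀ (μ : Measure (Euc n)) [IsFiniteMeasure μ], Integrable f μ → Integrable g μ →
      |∫ x, f x ∂μ - ∫ x, g x ∂μ| ≤ c * (μ Set.univ).toReal := by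
    intro μ _ h1 h2
    rw [← integral_sub h1 h2]
    calc |∫ x, (f x - g x) ∂μ| ≤ ∫ x, |f x - g x| ∂μ := by
          simpa [Real.norm_eq_abs] using
            MeasureTheory.norm_integral_le_integral_norm (μ := μ) (fun x => f x - g x)
      _ ≤ ∫ _x, c ∂μ := integral_mono (h1.sub h2).abs (integrable_const c) hfg
      _ = c * (μ Set.univ).toReal := by simp [mul_comm, Measure.real]
  have k1 := key (pos ν) hif hig
  have k2 := key (neg ν) hif' hig'
  unfold sInt
  rw [abs_le] at k1 k2
  have hc : 0 ≤ c := le_trans (abs_nonneg _) (hfg Classical.ofNonempty)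
  nlinarith [k1.1, k1.2, k2.1, k2.2]

end S9
namespace S9
open MeasureTheory
variable {m n : ℕ} {h : (Fin m → ℝ) → ℝ}

lemma matVec_single {M : Fin m → Fin n → ℝ} (i : Fin m) (j : Fin n) :
    matVec M (EuclideanSpace.single j 1) i = M i j := by
  unfold matVec
  rw [Finset.sum_eq_single j]
  · simp [EuclideanSpace.single_apply]
  · intro b _ hb; simp [EuclideanSpace.single_apply, hb]
  · intro hj; exact absurd (Finset.mem_univ j) hj

lemma inSubdiff_zero (hh : IsNorm h) : inSubdiffH h (fun (_ : Fin m) (_ : Fin n) => 0) := by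
  intro u _
  have : matVec (fun (_ : Fin m) (_ : Fin n) => (0:ℝ)) u = 0 := by
    funext i; simp [matVec]
  rw [this]
  have : dualNorm h (0 : Fin m → ℝ) ≤ 0 := dn_le hh fun θ _ => by simp
  linarith

lemma entry_bd (hm : 0 < m) (hh : IsNorm h) {a : ℝ} (ha : 0 < a)
    (hlb : ∀ θ, a * ‖θ‖ ≤ h θ) {M : Fin m → Fin n → ℝ} (hM : inSubdiffH h M)
    (i : Fin m) (j : Fin n) : |M i j| ≤ h (Pi.single i 1) := by
  have h1 : dualNorm h (matVec M (EuclideanSpace.single j 1)) ≤ 1 := by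
    refine hM _ ?_
    rw [EuclideanSpace.norm_single]; simp
  have h2 := dn_coord hm hh ha hlb (matVec M (EuclideanSpace.single j 1)) i
  rw [matVec_single] at h2
  have hb : 0 ≤ h (Pi.single i 1) := h_nonneg hh _
  nlinarith

def gS (h : (Fin m → ℝ) → ℝ) (N : Fin m → Fin n → ℝ) : Set ℝ :=
  {r | ∃ M : Fin m → Fin n → ℝ, inSubdiffH h M ∧ r = frob M N}

lemma gS_nonempty (hh : IsNorm h) (N : Fin m → Fin n → ℝ) : (gS h N).Nonempty :=
  ⟨0, fun _ _ => 0, inSubdiff_zero hh, by simp [frob]⟩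

lemma gS_bdd (hm : 0 < m) (hh : IsNorm h) {a : ℝ} (ha : 0 < a)
    (hlb : ∀ θ, a * ‖θ‖ ≤ h θ) (N : Fin m → Fin n → ℝ) :
    ∀ r ∈ gS h N, r ≤ ∑ i, ∑ j, h (Pi.single i 1) * |N i j| := by
  rintro r ⟨M, hM, rfl⟩
  unfold frob
  refine Finset.sum_le_sum fun i _ => Finset.sum_le_sum fun j _ => ?_
  calc M i j * N i j ≤ |M i j * N i j| := le_abs_self _
    _ = |M i j| * |N i j| := abs_mul _ _
    _ ≤ h (Pi.single i 1) * |N i j| :=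
        mul_le_mul_of_nonneg_right (entry_bd hm hh ha hlb hM i j) (abs_nonneg _)

lemma gen_bddAbove (hm : 0 < m) (hh : IsNorm h) {a : ℝ} (ha : 0 < a)
    (hlb : ∀ θ, a * ‖θ‖ ≤ h θ) (N : Fin m → Fin n → ℝ) : BddAbove (gS h N) :=
  ⟨_, gS_bdd hm hh ha hlb N⟩

lemma frob_le_gen (hm : 0 < m) (hh : IsNorm h) {a : ℝ} (ha : 0 < a)
    (hlb : ∀ θ, a * ‖θ‖ ≤ h θ) {M : Fin m → Fin n → ℝ} (hM : inSubdiffH h M)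
    (N : Fin m → Fin n → ℝ) : frob M N ≤ genNorm h N :=
  le_csSup (gen_bddAbove hm hh ha hlb N) ⟨M, hM, rfl⟩

lemma gen_nonneg (hm : 0 < m) (hh : IsNorm h) {a : ℝ} (ha : 0 < a)
    (hlb : ∀ θ, a * ‖θ‖ ≤ h θ) (N : Fin m → Fin n → ℝ) : 0 ≤ genNorm h N := by
  have := frob_le_gen hm hh ha hlb (inSubdiff_zero hh) N
  simpa [frob] using this

lemma gen_ub (hm : 0 < m) (hh : IsNorm h) {a : ℝ} (ha : 0 < a)
    (hlb : ∀ θ, a * ‖θ‖ ≤ h θ) (N : Fin m → Fin n → ℝ) :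
    genNorm h N ≤ ∑ i, ∑ j, h (Pi.single i 1) * |N i j| :=
  csSup_le (gS_nonempty hh N) (gS_bdd hm hh ha hlb N)

lemma gen_zero (hm : 0 < m) (hh : IsNorm h) {a : ℝ} (ha : 0 < a)
    (hlb : ∀ θ, a * ‖θ‖ ≤ h θ) {N : Fin m → Fin n → ℝ} (hN : ∀ i j, N i j = 0) :
    genNorm h N = 0 := by
  refine le_antisymm ?_ (gen_nonneg hm hh ha hlb N)
  have := gen_ub hm hh ha hlb N
  calc genNorm h N ≤ ∑ i, ∑ j, h (Pi.single i 1) * |N i j| := this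
    _ = 0 := by
        refine Finset.sum_eq_zero fun i _ => Finset.sum_eq_zero fun j _ => ?_
        rw [hN i j]; simp

end S9
namespace S9
open MeasureTheory
variable {m n : ℕ} {h : (Fin m → ℝ) → ℝ}

def TB (h : (Fin m → ℝ) → ℝ) (G : MatMeas m n) : ℝ :=
  ∑ i, ∑ j, h (Pi.single i 1) *
    ((pos (G i j) Set.univ).toReal + (neg (G i j) Set.univ).toReal)

lemma part_tsum (μ : Measure (Euc n)) [IsFiniteMeasure μ] {B : ℕ → Set (Euc n)}
    (hBm : ∀ k, MeasurableSet (B k)) (hBd : Pairwise (Function.onFun Disjoint B))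
    (hBu : (⋃ k, B k) = Set.univ) :
    Summable (fun k => (μ (B k)).toReal) ∧
      ∑' k, (μ (B k)).toReal = (μ Set.univ).toReal := by
  have hiu : μ (⋃ k, B k) = ∑' k, μ (B k) := measure_iUnion hBd hBm
  rw [hBu] at hiu
  have hne : ∑' k, μ (B k) ≠ ⊤ := by rw [← hiu]; exact measure_ne_top _ _
  constructor
  · exact ENNReal.summable_toReal hne
  · rw [← ENNReal.tsum_toReal_eq (fun k => measure_ne_top _ _), ← hiu]

def tvS (h : (Fin m → ℝ) → ℝ) (G : MatMeas m n) : Set ℝ :=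
  {r | ∃ B : ℕ → Set (Euc n), (∀ k, MeasurableSet (B k)) ∧
    Pairwise (Function.onFun Disjoint B) ∧ (⋃ k, B k) = Set.univ ∧
    r = ∑' k, genNorm h (fun i j => G i j (B k))}

lemma tvS_elem_le (hm : 0 < m) (hh : IsNorm h) {a : ℝ} (ha : 0 < a)
    (hlb : ∀ θ, a * ‖θ‖ ≤ h θ) (G : MatMeas m n) :
    ∀ r ∈ tvS h G, r ≤ TB h G := by
  rintro r ⟨B, hBm, hBd, hBu, rfl⟩
  set w' : ℕ → ℝ := fun k => ∑ i, ∑ j, h (Pi.single i 1) *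
    ((pos (G i j) (B k)).toReal + (neg (G i j) (B k)).toReal) with hw'
  have hptsum : ∀ (i : Fin m) (j : Fin n),
      Summable (fun k => (pos (G i j) (B k)).toReal) ∧
      ∑' k, (pos (G i j) (B k)).toReal = (pos (G i j) Set.univ).toReal :=
    fun i j => part_tsum _ hBm hBd hBu
  have hntsum : ∀ (i : Fin m) (j : Fin n),
      Summable (fun k => (neg (G i j) (B k)).toReal) ∧
      ∑' k, (neg (G i j) (B k)).toReal = (neg (G i j) Set.univ).toReal :=
    fun i j => part_tsum _ hBm hBd hBu
  have hsw' : Summable w' := by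
    refine summable_sum fun i _ => summable_sum fun j _ => ?_
    exact (((hptsum i j).1.add (hntsum i j).1).mul_left _)
  have hle : ∀ k, genNorm h (fun i j => G i j (B k)) ≤ w' k := by
    intro k
    calc genNorm h (fun i j => G i j (B k))
        ≤ ∑ i, ∑ j, h (Pi.single i 1) * |G i j (B k)| := gen_ub hm hh ha hlb _
      _ ≤ w' k := by
          refine Finset.sum_le_sum fun i _ => Finset.sum_le_sum fun j _ => ?_
          refine mul_le_mul_of_nonneg_left ?_ (h_nonneg hh _)
          rw [jordan_apply _ (hBm k)]
          have p1 : (0:ℝ) ≤ (pos (G i j) (B k)).toReal := ENNReal.toReal_nonneg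
          have p2 : (0:ℝ) ≤ (neg (G i j) (B k)).toReal := ENNReal.toReal_nonneg
          rw [abs_le]; constructor <;> linarith
  have hnng : ∀ k, 0 ≤ genNorm h (fun i j => G i j (B k)) :=
    fun k => gen_nonneg hm hh ha hlb _
  have hsg : Summable (fun k => genNorm h (fun i j => G i j (B k))) :=
    Summable.of_nonneg_of_le hnng hle hsw'
  calc ∑' k, genNorm h (fun i j => G i j (B k)) ≤ ∑' k, w' k := Summable.tsum_le_tsum hle hsg hsw'
    _ = TB h G := by
        rw [hw']
        rw [Summable.tsum_finsetSum (fun i _ => summable_sum fun j _ =>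
          (((hptsum i j).1.add (hntsum i j).1).mul_left _))]
        refine Finset.sum_congr rfl fun i _ => ?_
        rw [Summable.tsum_finsetSum (fun j _ => (((hptsum i j).1.add (hntsum i j).1).mul_left _))]
        refine Finset.sum_congr rfl fun j _ => ?_
        rw [tsum_mul_left, Summable.tsum_add (hptsum i j).1 (hntsum i j).1,
          (hptsum i j).2, (hntsum i j).2]

lemma tvS_bddAbove (hm : 0 < m) (hh : IsNorm h) {a : ℝ} (ha : 0 < a)
    (hlb : ∀ θ, a * ‖θ‖ ≤ h θ) (G : MatMeas m n) : BddAbove (tvS h G) :=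
  ⟨_, tvS_elem_le hm hh ha hlb G⟩

lemma le_tvH (hm : 0 < m) (hh : IsNorm h) {a : ℝ} (ha : 0 < a)
    (hlb : ∀ θ, a * ‖θ‖ ≤ h θ) (G : MatMeas m n) {r : ℝ} (hr : r ∈ tvS h G) :
    r ≤ tvH h G :=
  le_csSup (tvS_bddAbove hm hh ha hlb G) hr

end S9
namespace S9
open MeasureTheory Metric
variable {m n : ℕ} {h : (Fin m → ℝ) → ℝ}

lemma riemann (hm : 0 < m) (hh : IsNorm h) {a : ℝ} (ha : 0 < a)
    (hlb : ∀ θ, a * ‖θ‖ ≤ h θ)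
    (G : MatMeas m n) {K : Set (Euc n)} (hK : IsCompact K) (hGs : suppIn G K)
    {P : Euc n → Fin m → Fin n → ℝ} (hPc : Continuous P)
    (hPs : ∀ x, inSubdiffH h (P x)) :
    (∑ i, ∑ j, sInt (G i j) fun x => P x i j) ≤ tvH h G := by
  have hKm : MeasurableSet K := hK.measurableSet
  -- support facts
  have hsupp : ∀ (i : Fin m) (j : Fin n),
      pos (G i j) Kᶜ = 0 ∧ neg (G i j) Kᶜ = 0 :=
    fun i j => supp_parts hKm (fun B hB hd => hGs B hB hd i j)
  set Tμ : ℝ := ∑ i, ∑ j, ((pos (G i j) Set.univ).toReal + (neg (G i j) Set.univ).toReal)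
    with hTμ
  have hTμ0 : 0 ≤ Tμ := by
    refine Finset.sum_nonneg fun i _ => Finset.sum_nonneg fun j _ => ?_
    positivity
  -- main estimate for each ε > 0
  have main : ∀ ε : ℝ, 0 < ε →
      (∑ i, ∑ j, sInt (G i j) fun x => P x i j) ≤ tvH h G + ε * Tμ := by
    intro ε hε
    -- uniform continuity on K
    have hUC : UniformContinuousOn P K :=
      hK.uniformContinuousOn_of_continuous hPc.continuousOn
    rw [Metric.uniformContinuousOn_iff] at hUC
    obtain ⟨δ, hδ, hδP⟩ := hUC ε hε
    -- finite subcover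
    have hδ3 : 0 < δ / 3 := by positivity
    obtain ⟨s, hs⟩ := hK.elim_finite_subcover (fun x : Euc n => ball x (δ/3))
      (fun _ => isOpen_ball) (fun x _ => Set.mem_iUnion.2 ⟨x, mem_ball_self hδ3⟩)
    set l := s.toList with hl
    set N := l.length with hN
    set c : ℕ → Euc n := fun k => l.getD k 0 with hc
    have hcov : ∀ x ∈ K, ∃ k, k < N ∧ x ∈ ball (c k) (δ/3) := by
      intro x hx
      obtain ⟨y, hy, hxy⟩ := Set.mem_iUnion₂.1 (hs hx)
      rw [← Finset.mem_toList] at hy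
      obtain ⟨k, hk, hky⟩ := List.mem_iff_getElem.1 hy
      refine ⟨k, hk, ?_⟩
      have hck : c k = y := (List.getD_eq_getElem l 0 hk).trans hky
      rw [hck]; exact hxy
    -- the pieces
    set D : ℕ → Set (Euc n) := fun k =>
      (K ∩ ball (c k) (δ/3)) \ (⋃ l' ∈ Finset.range k, ball (c l') (δ/3)) with hD
    have hDm : ∀ k, MeasurableSet (D k) := by
      intro k
      exact ((hKm.inter measurableSet_ball).diff
        (Finset.measurableSet_biUnion _ fun _ _ => measurableSet_ball))
    have hDK : ∀ k, D k ⊆ K := fun k x hx => hx.1.1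
    have hDdisj : ∀ k k', k < k' → Disjoint (D k) (D k') := by
      intro k k' hkk'
      refine Set.disjoint_left.2 fun x hx hx' => ?_
      exact hx'.2 (Set.mem_biUnion (Finset.mem_range.2 hkk') hx.1.2)
    have hDunion : (⋃ k, D k) = K := by
      apply Set.Subset.antisymm
      · exact Set.iUnion_subset fun k => hDK k
      · intro x hx
        have hex : ∃ k, x ∈ ball (c k) (δ/3) := by
          obtain ⟨k, _, hk2⟩ := hcov x hx
          exact ⟨k, hk2⟩
        classical
        let k0 := Nat.find hex
        refine Set.mem_iUnion.2 ⟨k0, ⟨⟨hx, Nat.find_spec hex⟩, ?_⟩⟩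
        intro hmem
        obtain ⟨k', hk', hx'⟩ := Set.mem_iUnion₂.1 hmem
        exact Nat.find_min hex (Finset.mem_range.1 hk') hx'
    have hDempty : ∀ k, N ≤ k → D k = ∅ := by
      intro k hk
      rw [Set.eq_empty_iff_forall_notMem]
      intro x hx
      obtain ⟨k', hk', hx'⟩ := hcov x hx.1.1
      exact hx.2 (Set.mem_biUnion (Finset.mem_range.2 (lt_of_lt_of_le hk' hk)) hx')
    -- the partition of univ
    set B : ℕ → Set (Euc n) := fun k => if k = 0 then Kᶜ else D (k - 1) with hB
    have hBm : ∀ k, MeasurableSet (B k) := by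
      intro k; rw [hB]; dsimp only
      split
      · exact hKm.compl
      · exact hDm _
    have hBd : Pairwise (Function.onFun Disjoint B) := by
      intro k k' hkk'
      rcases Nat.eq_zero_or_pos k with rfl | hk
      · rcases Nat.eq_zero_or_pos k' with rfl | hk'
        · exact absurd rfl hkk'
        · simp only [Function.onFun, hB, if_pos rfl, if_neg hk'.ne']
          exact Set.disjoint_left.2 fun x hx hx' => hx (hDK _ hx')
      · rcases Nat.eq_zero_or_pos k' with rfl | hk'
        · simp only [Function.onFun, hB, if_pos rfl, if_neg hk.ne']
          exact Set.disjoint_left.2 fun x hx hx' => hx' (hDK _ hx)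
        · simp only [Function.onFun, hB, if_neg hk.ne', if_neg hk'.ne']
          have : k - 1 ≠ k' - 1 := by omega
          rcases lt_or_gt_of_ne this with hlt | hgt
          · exact hDdisj _ _ hlt
          · exact (hDdisj _ _ hgt).symm
    have hBu : (⋃ k, B k) = Set.univ := by
      rw [Set.eq_univ_iff_forall]
      intro x
      by_cases hx : x ∈ K
      · rw [← hDunion] at hx
        obtain ⟨k, hk⟩ := Set.mem_iUnion.1 hx
        refine Set.mem_iUnion.2 ⟨k + 1, ?_⟩
        simp only [hB, if_neg (Nat.succ_ne_zero k)]
        simpa using hk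
      · exact Set.mem_iUnion.2 ⟨0, by simpa [hB] using hx⟩
    -- tvH lower bound by the finite sum over D
    have htv : (∑ k ∈ Finset.range N, genNorm h (fun i j => G i j (D k))) ≤ tvH h G := by
      have hzero : ∀ k ∉ Finset.range (N + 1), genNorm h (fun i j => G i j (B k)) = 0 := by
        intro k hk
        simp only [Finset.mem_range, not_lt] at hk
        have hk0 : k ≠ 0 := by omega
        have : B k = ∅ := by
          simp only [hB, if_neg hk0]
          exact hDempty _ (by omega)
        rw [this]
        exact gen_zero hm hh ha hlb fun i j => (G i j).empty
      have hmem : (∑ k ∈ Finset.range (N + 1), genNorm h (fun i j => G i j (B k)))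
          ∈ tvS h G := by
        exact ⟨B, hBm, hBd, hBu, (tsum_eq_sum hzero).symm⟩
      have h0 : genNorm h (fun i j => G i j (B 0)) = 0 := by
        have : B 0 = Kᶜ := by simp [hB]
        rw [this]
        exact gen_zero hm hh ha hlb fun i j =>
          hGs Kᶜ hKm.compl disjoint_compl_left i j
      have hshift : (∑ k ∈ Finset.range (N + 1), genNorm h (fun i j => G i j (B k)))
          = ∑ k ∈ Finset.range N, genNorm h (fun i j => G i j (D k)) := by
        rw [Finset.sum_range_succ']
        simp only [h0, add_zero]
        refine Finset.sum_congr rfl fun k _ => ?_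
        have hBk : B (k+1) = D k := by simp [hB]
        rw [hBk]
      have := le_tvH hm hh ha hlb G hmem
      rwa [hshift] at this
    -- decompose integrals
    have hIntOn : ∀ (i : Fin m) (j : Fin n) (μ : Measure (Euc n)), IsFiniteMeasure μ →
        μ Kᶜ = 0 → ∀ k, IntegrableOn (fun x => P x i j) (D k) μ := by
      intro i j μ hfin hμ k
      have hPij : Continuous fun x => P x i j :=
        ((continuous_apply j).comp ((continuous_apply i).comp hPc))
      have : IntegrableOn (fun x => P x i j) K μ :=
        ContinuousOn.integrableOn_compact hK hPij.continuousOn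
      exact this.mono_set (hDK k)
    have hint_decomp : ∀ (i : Fin m) (j : Fin n) (μ : Measure (Euc n)),
        IsFiniteMeasure μ → μ Kᶜ = 0 →
        ∫ x, P x i j ∂μ = ∑ k ∈ Finset.range N, ∫ x in D k, P x i j ∂μ := by
      intro i j μ hfin hμ
      have h1 : ∫ x, P x i j ∂μ = ∫ x in K, P x i j ∂μ := by
        conv_lhs => rw [← restrict_eq hμ]
      have h2 : K = ⋃ k ∈ Finset.range N, D k := by
        rw [← hDunion]
        apply Set.Subset.antisymm
        · refine Set.iUnion_subset fun k => ?_
          rcases lt_or_ge k N with hk | hk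
          · exact Set.subset_biUnion_of_mem (Finset.mem_range.2 hk)
          · rw [hDempty k hk]; exact Set.empty_subset _
        · exact Set.iUnion₂_subset fun k _ => Set.subset_iUnion D k
      rw [h1, h2]
      exact integral_biUnion_finset _ (fun k _ => hDm k)
        (fun k _ k' _ hkk' => by
          rcases lt_or_gt_of_ne hkk' with hlt | hgt
          · exact hDdisj _ _ hlt
          · exact (hDdisj _ _ hgt).symm)
        (fun k _ => hIntOn i j μ hfin hμ k)
    -- per piece estimate
    have hpiece : ∀ k ∈ Finset.range N,
        (∑ i, ∑ j, (∫ x in D k, P x i j ∂(pos (G i j)) - ∫ x in D k, P x i j ∂(neg (G i j))))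
          ≤ genNorm h (fun i j => G i j (D k))
            + ε * ∑ i, ∑ j, ((pos (G i j) (D k)).toReal + (neg (G i j) (D k)).toReal) := by
      intro k _
      rcases Set.eq_empty_or_nonempty (D k) with hDe | ⟨y, hy⟩
      · rw [hDe]
        have hg : genNorm h (fun i j => G i j (∅ : Set (Euc n))) = 0 :=
          gen_zero hm hh ha hlb fun i j => by simpa using (G i j).empty
        rw [hg]
        simp only [Measure.restrict_empty, integral_zero_measure, sub_zero,
          Finset.sum_const_zero, measure_empty, ENNReal.toReal_zero, add_zero]
        positivity
      · -- nonempty case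
        have hyK : y ∈ K := hDK k hy
        have hclose : ∀ x ∈ D k, ∀ (i : Fin m) (j : Fin n), |P x i j - P y i j| ≤ ε := by
          intro x hx i j
          have hxK : x ∈ K := hDK k hx
          have hdist : dist x y < δ := by
            have h1 : dist x (c k) < δ/3 := hx.1.2
            have h2 : dist y (c k) < δ/3 := hy.1.2
            calc dist x y ≤ dist x (c k) + dist (c k) y := dist_triangle _ _ _
              _ < δ/3 + δ/3 := by rw [dist_comm (c k) y]; linarith
              _ < δ := by linarith
          have := hδP x hxK y hyK hdist
          have h1 : dist (P x i) (P y i) ≤ dist (P x) (P y) := dist_le_pi_dist _ _ i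
          have h2 : dist (P x i j) (P y i j) ≤ dist (P x i) (P y i) := dist_le_pi_dist _ _ j
          rw [Real.dist_eq] at h2
          linarith
        have hterm : ∀ (i : Fin m) (j : Fin n),
            (∫ x in D k, P x i j ∂(pos (G i j)) - ∫ x in D k, P x i j ∂(neg (G i j)))
              ≤ P y i j * G i j (D k)
                + ε * ((pos (G i j) (D k)).toReal + (neg (G i j) (D k)).toReal) := by
          intro i j
          have hepos : ∀ (μ : Measure (Euc n)) [IsFiniteMeasure μ], μ Kᶜ = 0 →
              |∫ x in D k, P x i j ∂μ - P y i j * (μ (D k)).toReal| ≤ ε * (μ (D k)).toReal := by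
            intro μ hfin hμ
            have hIc : IntegrableOn (fun x => P x i j) (D k) μ := hIntOn i j μ hfin hμ k
            have hconst : ∫ _x in D k, P y i j ∂μ = (μ (D k)).toReal * P y i j := by
              rw [setIntegral_const]; simp [smul_eq_mul, Measure.real]
            have hsub : ∫ x in D k, P x i j ∂μ - P y i j * (μ (D k)).toReal
                = ∫ x in D k, (P x i j - P y i j) ∂μ := by
              rw [integral_sub hIc (integrableOn_const (measure_ne_top _ _)),
                hconst]
              ring
            rw [hsub]
            have := norm_setIntegral_le_of_norm_le_const (μ := μ) (s := D k)
              (f := fun x => P x i j - P y i j) (C := ε) (measure_lt_top _ _)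
              (fun x hx => by rw [Real.norm_eq_abs]; exact hclose x hx i j)
            rw [Real.norm_eq_abs] at this; exact this
          have hp := hepos (pos (G i j)) (hsupp i j).1
          have hq := hepos (neg (G i j)) (hsupp i j).2
          rw [abs_le] at hp hq
          have hj := jordan_apply (G i j) (hDm k)
          rw [hj]
          have he : P y i j * ((pos (G i j) (D k)).toReal - (neg (G i j) (D k)).toReal)
              = P y i j * (pos (G i j) (D k)).toReal
                - P y i j * (neg (G i j) (D k)).toReal := by ring
          rw [he]
          linarith [hp.1, hp.2, hq.1, hq.2]
        calc (∑ i, ∑ j, (∫ x in D k, P x i j ∂(pos (G i j)) - ∫ x in D k, P x i j ∂(neg (G i j))))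
            ≤ ∑ i, ∑ j, (P y i j * G i j (D k)
                + ε * ((pos (G i j) (D k)).toReal + (neg (G i j) (D k)).toReal)) :=
              Finset.sum_le_sum fun i _ => Finset.sum_le_sum fun j _ => hterm i j
          _ = frob (P y) (fun i j => G i j (D k))
              + ε * ∑ i, ∑ j, ((pos (G i j) (D k)).toReal + (neg (G i j) (D k)).toReal) := by
              rw [frob, Finset.mul_sum, ← Finset.sum_add_distrib]
              refine Finset.sum_congr rfl fun i _ => ?_
              rw [Finset.mul_sum, ← Finset.sum_add_distrib]
          _ ≤ genNorm h (fun i j => G i j (D k))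
              + ε * ∑ i, ∑ j, ((pos (G i j) (D k)).toReal + (neg (G i j) (D k)).toReal) := by
              have := frob_le_gen hm hh ha hlb (hPs y) (fun i j => G i j (D k))
              linarith
    -- assemble
    have step : ∀ (i : Fin m) (j : Fin n), sInt (G i j) (fun x => P x i j)
        = ∑ k ∈ Finset.range N,
            (∫ x in D k, P x i j ∂(pos (G i j)) - ∫ x in D k, P x i j ∂(neg (G i j))) := by
      intro i j
      unfold sInt
      rw [hint_decomp i j (pos (G i j)) inferInstance (hsupp i j).1,
          hint_decomp i j (neg (G i j)) inferInstance (hsupp i j).2,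
          ← Finset.sum_sub_distrib]
    have hLHS : (∑ i, ∑ j, sInt (G i j) fun x => P x i j)
        = ∑ k ∈ Finset.range N, ∑ i, ∑ j,
            (∫ x in D k, P x i j ∂(pos (G i j)) - ∫ x in D k, P x i j ∂(neg (G i j))) := by
      calc (∑ i, ∑ j, sInt (G i j) fun x => P x i j)
          = ∑ i, ∑ j, ∑ k ∈ Finset.range N,
              (∫ x in D k, P x i j ∂(pos (G i j)) - ∫ x in D k, P x i j ∂(neg (G i j))) :=
            Finset.sum_congr rfl fun i _ => Finset.sum_congr rfl fun j _ => step i j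
        _ = ∑ i, ∑ k ∈ Finset.range N, ∑ j,
              (∫ x in D k, P x i j ∂(pos (G i j)) - ∫ x in D k, P x i j ∂(neg (G i j))) :=
            Finset.sum_congr rfl fun i _ => Finset.sum_comm
        _ = _ := Finset.sum_comm
    have hTk : (∑ k ∈ Finset.range N, ∑ i, ∑ j,
        ((pos (G i j) (D k)).toReal + (neg (G i j) (D k)).toReal)) ≤ Tμ := by
      have hmeas_le : ∀ (μ : Measure (Euc n)) [IsFiniteMeasure μ],
          ∑ k ∈ Finset.range N, (μ (D k)).toReal ≤ (μ Set.univ).toReal := by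
        intro μ _
        have hd : Set.PairwiseDisjoint (↑(Finset.range N)) D := by
          intro k _ k' _ hkk'
          rcases lt_or_gt_of_ne hkk' with hlt | hgt
          · exact hDdisj _ _ hlt
          · exact (hDdisj _ _ hgt).symm
        have h1 : (∑ k ∈ Finset.range N, μ (D k)) = μ (⋃ k ∈ Finset.range N, D k) :=
          (measure_biUnion_finset hd fun k _ => hDm k).symm
        have h2 : ∑ k ∈ Finset.range N, (μ (D k)).toReal
            = (μ (⋃ k ∈ Finset.range N, D k)).toReal := by
          rw [← h1, ENNReal.toReal_sum (fun k _ => measure_ne_top _ _)]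
        rw [h2]
        exact ENNReal.toReal_mono (measure_ne_top _ _) (measure_mono (Set.subset_univ _))
      calc (∑ k ∈ Finset.range N, ∑ i, ∑ j,
            ((pos (G i j) (D k)).toReal + (neg (G i j) (D k)).toReal))
          = ∑ i, ∑ k ∈ Finset.range N, ∑ j,
            ((pos (G i j) (D k)).toReal + (neg (G i j) (D k)).toReal) := Finset.sum_comm
        _ = ∑ i, ∑ j, ∑ k ∈ Finset.range N,
            ((pos (G i j) (D k)).toReal + (neg (G i j) (D k)).toReal) :=
            Finset.sum_congr rfl fun i _ => Finset.sum_comm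
        _ ≤ Tμ := by
            rw [hTμ]
            refine Finset.sum_le_sum fun i _ => Finset.sum_le_sum fun j _ => ?_
            rw [Finset.sum_add_distrib]
            exact add_le_add (hmeas_le (pos (G i j))) (hmeas_le (neg (G i j)))
    calc (∑ i, ∑ j, sInt (G i j) fun x => P x i j)
        = ∑ k ∈ Finset.range N, ∑ i, ∑ j,
            (∫ x in D k, P x i j ∂(pos (G i j)) - ∫ x in D k, P x i j ∂(neg (G i j))) := hLHS
      _ ≤ ∑ k ∈ Finset.range N, (genNorm h (fun i j => G i j (D k))
            + ε * ∑ i, ∑ j, ((pos (G i j) (D k)).toReal + (neg (G i j) (D k)).toReal)) :=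
          Finset.sum_le_sum hpiece
      _ = (∑ k ∈ Finset.range N, genNorm h (fun i j => G i j (D k)))
            + ε * ∑ k ∈ Finset.range N, ∑ i, ∑ j,
              ((pos (G i j) (D k)).toReal + (neg (G i j) (D k)).toReal) := by
          rw [Finset.sum_add_distrib, Finset.mul_sum]
      _ ≤ tvH h G + ε * Tμ := by
          have h2 : ε * (∑ k ∈ Finset.range N, ∑ i, ∑ j,
              ((pos (G i j) (D k)).toReal + (neg (G i j) (D k)).toReal)) ≤ ε * Tμ :=
            mul_le_mul_of_nonneg_left hTk hε.le
          linarith [htv]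
  -- conclude
  refine le_of_forall_pos_le_add fun ε' hε' => ?_
  have := main (ε' / (Tμ + 1)) (by positivity)
  have h2 : ε' / (Tμ + 1) * Tμ ≤ ε' := by
    rw [div_mul_eq_mul_div, div_le_iff₀ (by positivity)]
    nlinarith
  linarith

end S9
namespace S9
open MeasureTheory Metric Filter Convolution
variable {m n : ℕ} {h : (Fin m → ℝ) → ℝ}

lemma adm_coord (hm : 0 < m) (hh : IsNorm h) {a : ℝ} (ha : 0 < a)
    (hlb : ∀ θ, a * ‖θ‖ ≤ h θ) {ψ : Euc n → Fin m → ℝ} (hψ : admissible h ψ)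
    (x y : Euc n) (i : Fin m) : |ψ y i - ψ x i| ≤ h (Pi.single i 1) * ‖y - x‖ := by
  have h1 := dn_coord hm hh ha hlb (ψ y - ψ x) i
  have h2 := hψ x y
  have h3 : (ψ y - ψ x) i = ψ y i - ψ x i := rfl
  rw [h3] at h1
  calc |ψ y i - ψ x i| ≤ h (Pi.single i 1) * dualNorm h (ψ y - ψ x) := h1
    _ ≤ h (Pi.single i 1) * ‖y - x‖ :=
        mul_le_mul_of_nonneg_left h2 (h_nonneg hh _)

lemma adm_cont (hm : 0 < m) (hh : IsNorm h) {a : ℝ} (ha : 0 < a)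
    (hlb : ∀ θ, a * ‖θ‖ ≤ h θ) {ψ : Euc n → Fin m → ℝ} (hψ : admissible h ψ) :
    Continuous ψ := by
  refine continuous_pi fun i => ?_
  refine ((LipschitzWith.of_dist_le_mul (K := Real.toNNReal (h (Pi.single i 1)))
    (f := fun x => ψ x i) fun x y => ?_)).continuous
  rw [Real.dist_eq, Real.coe_toNNReal _ (h_nonneg hh _), dist_eq_norm]
  exact adm_coord hm hh ha hlb hψ y x i

lemma exists_moll (hm : 0 < m) (hh : IsNorm h) {a : ℝ} (ha : 0 < a)
    (hlb : ∀ θ, a * ‖θ‖ ≤ h θ) {ψ : Euc n → Fin m → ℝ} (hψ : admissible h ψ)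
    {ε : ℝ} (hε : 0 < ε) :
    ∃ φε : Euc n → Fin m → ℝ, ContDiff ℝ (⊤ : ℕ∞) φε ∧ admissible h φε ∧
      (∀ x i, |φε x i - ψ x i| ≤ h (Pi.single i 1) * ε) ∧
      (∀ x, inSubdiffH h (jac φε x)) := by
  classical
  have hψc : Continuous ψ := adm_cont hm hh ha hlb hψ
  have hψic : ∀ i : Fin m, Continuous fun y => ψ y i :=
    fun i => (continuous_apply i).comp hψc
  set k : ContDiffBump (0 : Euc n) := ⟨ε/2, ε, by positivity, by linarith⟩ with hk
  set ρ : Euc n → ℝ := k.normed volume with hρ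
  have hρc : ContDiff ℝ (⊤ : ℕ∞) ρ := k.contDiff_normed
  have hρs : HasCompactSupport ρ := k.hasCompactSupport_normed
  have hρi : ∫ t, ρ t = 1 := k.integral_normed
  have hρ0 : ∀ t, 0 ≤ ρ t := fun t => k.nonneg_normed t
  have hρsupp : ∀ t, ρ t ≠ 0 → ‖t‖ < ε := by
    intro t ht
    have h1 : t ∈ Function.support ρ := ht
    rw [k.support_normed_eq] at h1
    simpa [hk] using mem_ball_zero_iff.1 h1
  set φε : Euc n → Fin m → ℝ := fun x i =>
    (ρ ⋆[ContinuousLinearMap.lsmul ℝ ℝ, volume] (fun y => ψ y i)) x with hφε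
  have hconv : ∀ (x : Euc n) (i : Fin m), φε x i = ∫ t, ρ t * ψ (x - t) i := by
    intro x i
    rw [hφε]
    simp only [convolution_def, ContinuousLinearMap.lsmul_apply, smul_eq_mul]
  have hsmooth : ContDiff ℝ (⊤ : ℕ∞) φε := by
    refine contDiff_pi.2 fun i => ?_
    exact HasCompactSupport.contDiff_convolution_left _ hρs hρc
      ((hψic i).locallyIntegrable)
  have hInt : ∀ (x : Euc n) (i : Fin m), Integrable (fun t => ρ t * ψ (x - t) i) := by
    intro x i
    have hcs : HasCompactSupport fun t => ρ t * ψ (x - t) i :=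
      HasCompactSupport.mul_right hρs
    refine Continuous.integrable_of_hasCompactSupport ?_ hcs
    exact (hρc.continuous).mul ((hψic i).comp (continuous_const.sub continuous_id))
  have hadm : admissible h φε := by
    intro x y
    refine dn_le hh fun θ hθ => ?_
    have hIsub : ∀ i : Fin m,
        Integrable (fun t => ρ t * ((ψ (y - t) i - ψ (x - t) i) * θ i)) := by
      intro i
      have : (fun t => ρ t * ((ψ (y - t) i - ψ (x - t) i) * θ i))
          = fun t => (ρ t * ψ (y - t) i - ρ t * ψ (x - t) i) * θ i := by
        funext t; ring
      rw [this]
      exact ((hInt y i).sub (hInt x i)).mul_const _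
    have key : ∑ i, (φε y - φε x) i * θ i
        = ∫ t, ∑ i, ρ t * ((ψ (y - t) i - ψ (x - t) i) * θ i) := by
      rw [integral_finset_sum _ (fun i _ => hIsub i)]
      refine Finset.sum_congr rfl fun i _ => ?_
      have h1 : (φε y - φε x) i = φε y i - φε x i := rfl
      rw [h1, hconv y i, hconv x i, ← integral_sub (hInt y i) (hInt x i)]
      rw [← integral_mul_const]
      refine integral_congr_ae (Filter.Eventually.of_forall fun t => ?_)
      ring
    rw [key]
    have hbound : ∀ t, ∑ i, ρ t * ((ψ (y - t) i - ψ (x - t) i) * θ i) ≤ ρ t * ‖y - x‖ := by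
      intro t
      have hdot : ∑ i, (ψ (y - t) - ψ (x - t)) i * θ i ≤ dualNorm h (ψ (y - t) - ψ (x - t)) :=
        dn_dot hm hh ha hlb _ θ hθ
      have hdn : dualNorm h (ψ (y - t) - ψ (x - t)) ≤ ‖y - x‖ := by
        have := hψ (x - t) (y - t)
        rwa [sub_sub_sub_cancel_right] at this
      have hS : ∑ i, (ψ (y - t) i - ψ (x - t) i) * θ i ≤ ‖y - x‖ := le_trans hdot hdn
      calc ∑ i, ρ t * ((ψ (y - t) i - ψ (x - t) i) * θ i)
          = ρ t * ∑ i, (ψ (y - t) i - ψ (x - t) i) * θ i := by rw [Finset.mul_sum]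
        _ ≤ ρ t * ‖y - x‖ := mul_le_mul_of_nonneg_left hS (hρ0 t)
    calc ∫ t, ∑ i, ρ t * ((ψ (y - t) i - ψ (x - t) i) * θ i)
        ≤ ∫ t, ρ t * ‖y - x‖ :=
          integral_mono (integrable_finset_sum _ fun i _ => hIsub i)
            (k.integrable_normed.mul_const _) hbound
      _ = ‖y - x‖ := by rw [integral_mul_const, hρi, one_mul]
  refine ⟨φε, hsmooth, hadm, ?_, ?_⟩
  · -- closeness
    intro x i
    have hconst : ∫ t, ρ t * ψ x i = ψ x i := by rw [integral_mul_const, hρi, one_mul]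
    have hdiff : φε x i - ψ x i = ∫ t, ρ t * (ψ (x - t) i - ψ x i) := by
      have h2 : ∫ t, ρ t * (ψ (x - t) i - ψ x i)
          = (∫ t, ρ t * ψ (x - t) i) - ∫ t, ρ t * ψ x i := by
        rw [← integral_sub (hInt x i) (k.integrable_normed.mul_const _)]
        refine integral_congr_ae (Filter.Eventually.of_forall fun t => ?_)
        ring
      rw [h2, hconst, hconv x i]
    have hptw : ∀ t, |ρ t| * |ψ (x - t) i - ψ x i| ≤ ρ t * (h (Pi.single i 1) * ε) := by
      intro t
      by_cases hz : ρ t = 0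
      · simp [hz]
      · have htε : ‖t‖ < ε := hρsupp t hz
        have := adm_coord hm hh ha hlb hψ x (x - t) i
        have he : ‖x - t - x‖ = ‖t‖ := by
          rw [show x - t - x = -t by abel, norm_neg]
        rw [he] at this
        rw [abs_of_nonneg (hρ0 t)]
        refine mul_le_mul_of_nonneg_left ?_ (hρ0 t)
        calc |ψ (x - t) i - ψ x i| ≤ h (Pi.single i 1) * ‖t‖ := this
          _ ≤ h (Pi.single i 1) * ε :=
              mul_le_mul_of_nonneg_left htε.le (h_nonneg hh _)
    have hIa : Integrable (fun t => ρ t * (ψ (x - t) i - ψ x i)) := by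
      have : (fun t => ρ t * (ψ (x - t) i - ψ x i))
          = fun t => ρ t * ψ (x - t) i - ρ t * ψ x i := by funext t; ring
      rw [this]
      exact (hInt x i).sub (k.integrable_normed.mul_const _)
    rw [hdiff]
    have habs : Integrable (fun t => |ρ t| * |ψ (x - t) i - ψ x i|) := by
      have he : (fun t => |ρ t| * |ψ (x - t) i - ψ x i|)
          = fun t => |ρ t * (ψ (x - t) i - ψ x i)| := by
        funext t; rw [abs_mul]
      rw [he]; exact hIa.abs
    calc |∫ t, ρ t * (ψ (x - t) i - ψ x i)|
        ≤ ∫ t, |ρ t| * |ψ (x - t) i - ψ x i| := by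
          simpa [Real.norm_eq_abs] using norm_integral_le_integral_norm
            (μ := volume) (fun t => ρ t * (ψ (x - t) i - ψ x i))
      _ ≤ ∫ t, ρ t * (h (Pi.single i 1) * ε) := integral_mono habs
          (k.integrable_normed.mul_const _) hptw
      _ = h (Pi.single i 1) * ε := by rw [integral_mul_const, hρi, one_mul]
  · -- jacobian in subdifferential
    intro x u hu
    have hdφ : Differentiable ℝ φε := hsmooth.differentiable (by simp)
    have hmv : matVec (jac φε x) u = fderiv ℝ φε x u := by
      funext i
      have hu' : u = ∑ j, u j • EuclideanSpace.single j (1:ℝ) := by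
        ext b
        rw [WithLp.ofLp_sum, Finset.sum_apply]
        rw [Finset.sum_eq_single b]
        · simp [EuclideanSpace.single_apply]
        · intro c _ hc; simp [EuclideanSpace.single_apply, Ne.symm hc]
        · intro hb; exact absurd (Finset.mem_univ b) hb
      conv_rhs => rw [hu']
      rw [map_sum]
      rw [Finset.sum_apply]
      unfold matVec jac
      refine Finset.sum_congr rfl fun j _ => ?_
      rw [ContinuousLinearMap.map_smul]
      simp [mul_comm]
    rw [hmv]
    -- slope argument
    set g : ℝ → Fin m → ℝ := fun t => φε (x + t • u) with hg
    have hline : HasDerivAt (fun t : ℝ => x + t • u) u 0 := by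
      have h1 : HasDerivAt (fun t : ℝ => t • u) ((1:ℝ) • u) 0 :=
        (hasDerivAt_id (0:ℝ)).smul_const u
      simpa using h1.const_add x
    have hgd : HasDerivAt g (fderiv ℝ φε x u) 0 := by
      have h1 := (hdφ (x + (0:ℝ) • u)).hasFDerivAt.comp_hasDerivAt 0 hline
      rw [zero_smul, add_zero] at h1
      exact h1
    have hslope := hasDerivAt_iff_tendsto_slope.1 hgd
    have hdn_cont : Continuous (dualNorm h) := dn_cont hm hh ha hlb
    have htend : Tendsto (fun t => dualNorm h (slope g 0 t)) (nhdsWithin 0 {(0:ℝ)}ᶜ)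
        (nhds (dualNorm h (fderiv ℝ φε x u))) :=
      (hdn_cont.tendsto _).comp hslope
    have hbd : ∀ t : ℝ, t ≠ 0 → dualNorm h (slope g 0 t) ≤ ‖u‖ := by
      intro t ht
      have hsl : slope g 0 t = (t - 0)⁻¹ • (g t - g 0) := by
        rw [slope_def_module]
      rw [hsl, sub_zero]
      calc dualNorm h (t⁻¹ • (g t - g 0)) ≤ |t⁻¹| * dualNorm h (g t - g 0) :=
            dn_smul_le hm hh ha hlb _ _
        _ ≤ |t⁻¹| * (|t| * ‖u‖) := by
            refine mul_le_mul_of_nonneg_left ?_ (abs_nonneg _)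
            have := hadm x (x + t • u)
            have he : ‖x + t • u - x‖ = |t| * ‖u‖ := by
              rw [show x + t • u - x = t • u by abel, norm_smul, Real.norm_eq_abs]
            rw [he] at this
            simpa [hg] using this
        _ = ‖u‖ := by
            rw [abs_inv, ← mul_assoc, inv_mul_cancel₀ (abs_ne_zero.2 ht), one_mul]
    have hfinal : dualNorm h (fderiv ℝ φε x u) ≤ ‖u‖ := by
      refine le_of_tendsto htend ?_
      refine eventually_nhdsWithin_of_forall fun t ht => ?_
      exact hbd t ht
    calc dualNorm h (fderiv ℝ φε x u) ≤ ‖u‖ := hfinal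
      _ ≤ 1 := hu

end S9
namespace S9
open MeasureTheory Metric Filter
variable {m n : ℕ} {h : (Fin m → ℝ) → ℝ}

lemma weak (hm : 0 < m) (hh : IsNorm h) {a : ℝ} (ha : 0 < a)
    (hlb : ∀ θ, a * ‖θ‖ ≤ h θ)
    (F0 : VecMeas m n) (hF0 : vSuppInCpt F0)
    (G : MatMeas m n) (hGc : suppInCpt G) (hGb : isBoundary G F0)
    (ψ : Euc n → Fin m → ℝ) (hψ : admissible h ψ) :
    intDual F0 ψ ≤ tvH h G := by
  obtain ⟨K0, hK0, hF0s⟩ := hF0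
  obtain ⟨KG, hKG, hGs⟩ := hGc
  set CL : ℝ := ∑ i, h (Pi.single i 1) *
    ((pos (F0 i) Set.univ).toReal + (neg (F0 i) Set.univ).toReal) with hCL
  have hCL0 : 0 ≤ CL := by
    refine Finset.sum_nonneg fun i _ => mul_nonneg (h_nonneg hh _) (by positivity)
  obtain ⟨R0, hR0sub⟩ := (hK0.isBounded.union hKG.isBounded).subset_ball (0 : Euc n)
  set R := max R0 1 with hR
  have hR1 : (0:ℝ) < R := lt_of_lt_of_le one_pos (le_max_right _ _)
  have hsub : K0 ∪ KG ⊆ ball (0 : Euc n) R :=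
    hR0sub.trans (ball_subset_ball (le_max_left _ _))
  have main : ∀ ε : ℝ, 0 < ε → intDual F0 ψ ≤ tvH h G + ε * CL := by
    intro ε hε
    obtain ⟨φε, hsm, hadm, hclose, hsubd⟩ := exists_moll hm hh ha hlb hψ hε
    set χ : ContDiffBump (0 : Euc n) := ⟨R, R+1, hR1, by linarith⟩ with hχ
    set ψt : Euc n → Fin m → ℝ := fun x => (χ : Euc n → ℝ) x • φε x with hψt
    have hψtsm : ContDiff ℝ (⊤ : ℕ∞) ψt := (χ.contDiff).smul hsm
    have hψtcs : HasCompactSupport ψt := χ.hasCompactSupport.smul_right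
    have hb := hGb ψt hψtsm hψtcs
    have hχ1 : ∀ x ∈ ball (0:Euc n) R, (χ : Euc n → ℝ) x = 1 := by
      intro x hx
      refine χ.one_of_mem_closedBall ?_
      have : R ≤ χ.rIn := le_refl _
      exact ball_subset_closedBall hx
    have hjac : ∀ x ∈ ball (0:Euc n) R, ∀ (i : Fin m) (j : Fin n),
        jac ψt x i j = jac φε x i j := by
      intro x hx i j
      have hev : ψt =ᶠ[nhds x] φε := by
        filter_upwards [isOpen_ball.mem_nhds hx] with y hy
        rw [hψt]
        simp only
        rw [hχ1 y hy, one_smul]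
      unfold jac
      rw [hev.fderiv_eq]
    -- continuity of jac φε
    have hPc : Continuous (fun x => jac φε x) := by
      refine continuous_pi fun i => continuous_pi fun j => ?_
      have h1 : Continuous (fun x => fderiv ℝ φε x) :=
        hsm.continuous_fderiv (by simp)
      have h2 : Continuous fun x => (fderiv ℝ φε x) (EuclideanSpace.single j (1:ℝ)) :=
        h1.clm_apply continuous_const
      exact (continuous_apply i).comp h2
    -- step 1 : intDual F0 ψ ≤ intDual F0 φε + ε * CL
    have hψcont : Continuous ψ := adm_cont hm hh ha hlb hψ
    have step1 : intDual F0 ψ ≤ intDual F0 φε + ε * CL := by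
      unfold intDual
      rw [hCL, Finset.mul_sum, ← Finset.sum_add_distrib]
      refine Finset.sum_le_sum fun i _ => ?_
      have hbd := sInt_bound (ν := F0 i) hK0.measurableSet hK0
        (fun B hB hd => hF0s B hB hd i)
        ((continuous_apply i).comp hψcont)
        ((continuous_apply i).comp hsm.continuous)
        (c := h (Pi.single i 1) * ε)
        (fun x => by rw [abs_sub_comm]; exact hclose x i)
      calc sInt (F0 i) (fun x => ψ x i)
          ≤ sInt (F0 i) (fun x => φε x i) + (h (Pi.single i 1) * ε) *
              ((pos (F0 i) Set.univ).toReal + (neg (F0 i) Set.univ).toReal) := hbd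
        _ = sInt (F0 i) (fun x => φε x i) + ε * (h (Pi.single i 1) *
              ((pos (F0 i) Set.univ).toReal + (neg (F0 i) Set.univ).toReal)) := by ring
    -- step 2 : intDual F0 φε = intDual F0 ψt
    have step2 : intDual F0 φε = intDual F0 ψt := by
      unfold intDual
      refine Finset.sum_congr rfl fun i _ => ?_
      refine (sInt_congr hK0.measurableSet (fun B hB hd => hF0s B hB hd i) ?_).symm
      intro x hx
      have hxb : x ∈ ball (0:Euc n) R := hsub (Set.mem_union_left _ hx)
      rw [hψt]
      simp only
      rw [hχ1 x hxb, one_smul]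
    -- step 3 : boundary identity + jac congruence
    have step3 : intDual F0 ψt = ∑ i, ∑ j, sInt (G i j) fun x => jac φε x i j := by
      rw [intDual, ← hb]
      refine Finset.sum_congr rfl fun i _ => Finset.sum_congr rfl fun j _ => ?_
      refine sInt_congr hKG.measurableSet (fun B hB hd => hGs B hB hd i j) ?_
      intro x hx
      exact hjac x (hsub (Set.mem_union_right _ hx)) i j
    -- step 4 : riemann
    have step4 : (∑ i, ∑ j, sInt (G i j) fun x => jac φε x i j) ≤ tvH h G :=
      riemann hm hh ha hlb G hKG hGs hPc hsubd
    linarith [step1, step2 ▸ step1, step4]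
  refine le_of_forall_pos_le_add fun ε' hε' => ?_
  have := main (ε' / (CL + 1)) (by positivity)
  have h2 : ε' / (CL + 1) * CL ≤ ε' := by
    rw [div_mul_eq_mul_div, div_le_iff₀ (by positivity)]
    nlinarith
  linarith

end S9

end S9prelude

/-- if `Dφ` is a calibration for `F` (i.e. `(F, φ)` is a feasible
primal-dual pair with equal objective values `|F|_H = ∫ φ · dF₀`), then `F` is
optimal for the primal and `φ` for the dual problem. -/
theorem statement9 {m n : ℕ} (hm : 0 < m) (hn : 0 < n)
    (h : (Fin m → ℝ) → ℝ) (hh : IsNorm h)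
    (F0 : VecMeas m n) (hF0 : vSuppInCpt F0)
    (F : MatMeas m n) (hFc : suppInCpt F) (hb : isBoundary F F0)
    (φ : Euc n → Fin m → ℝ) (hφ : admissible h φ)
    (hcal : tvH h F = intDual F0 φ) :
    (∀ G : MatMeas m n, suppInCpt G → isBoundary G F0 → tvH h F ≤ tvH h G) ∧
    (∀ ψ : Euc n → Fin m → ℝ, admissible h ψ → intDual F0 ψ ≤ intDual F0 φ) := by
  obtain ⟨a, ha, hlb⟩ := S9.exists_lb hm hh
  constructor
  · intro G hGc hGb
    rw [hcal]
    exact S9.weak hm hh ha hlb F0 hF0 G hGc hGb φ hφ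
  · intro ψ hψ
    have := S9.weak hm hh ha hlb F0 hF0 F hFc hb ψ hψ
    rwa [hcal] at this
end
end

section
/- Let m, n be positive integers and h a norm on ℝ^m. Let M ∈ ℝ^{m×n} satisfy h_*(M u) ≤ |u| for all u ∈ ℝ^n (i.e. M ∈ ∂H(0)). If θ ∈ ℝ^m and e ∈ ℝ^n is a unit vector with θ · (M e) = h(θ), then Mᵀ θ = h(θ) e. -/
open MeasureTheory

noncomputable section

section aux
variable {m : ℕ} {h : (Fin m → ℝ) → ℝ}

lemma IsNorm.zero (hh : IsNorm h) : h 0 = 0 := by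
  have := hh.2.1 0 0
  simpa using this

lemma IsNorm.nonneg (hh : IsNorm h) (x : Fin m → ℝ) : 0 ≤ h x := by
  have h1 := hh.1 x (-x)
  have h2 : h (-x) = h x := by simpa using hh.2.1 (-1) x
  have h0 : h 0 = 0 := hh.zero
  simp only [add_neg_cancel, h0, h2] at h1
  linarith

lemma IsNorm.le_const (hh : IsNorm h) :
    ∃ C : ℝ, 0 ≤ C ∧ ∀ x, h x ≤ C * ‖x‖ := by
  refine ⟨∑ i, h (Pi.single i 1), Finset.sum_nonneg fun i _ => hh.nonneg _, fun x => ?_⟩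
  have hx : x = ∑ i, (x i) • (Pi.single i 1 : Fin m → ℝ) := by
    ext j
    simp [Pi.single_apply, Finset.sum_apply]
  calc h x = h (∑ i, (x i) • (Pi.single i 1 : Fin m → ℝ)) := by rw [← hx]
    _ ≤ ∑ i, h ((x i) • (Pi.single i 1 : Fin m → ℝ)) :=
        Finset.le_sum_of_subadditive h hh.zero.le hh.1 _ _
    _ = ∑ i, |x i| * h (Pi.single i 1) := by simp [hh.2.1]
    _ ≤ ∑ i, ‖x‖ * h (Pi.single i 1) := by
        refine Finset.sum_le_sum fun i _ => ?_
        exact mul_le_mul_of_nonneg_right (by simpa using norm_le_pi_norm x i) (hh.nonneg _)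
    _ = (∑ i, h (Pi.single i 1)) * ‖x‖ := by
        rw [Finset.sum_mul]; exact Finset.sum_congr rfl fun i _ => mul_comm _ _

lemma IsNorm.continuous (hh : IsNorm h) : Continuous h := by
  obtain ⟨C, hC0, hC⟩ := hh.le_const
  have key : ∀ x y, |h x - h y| ≤ C * ‖x - y‖ := by
    intro x y
    have h1 : h x ≤ h (x - y) + h y := by
      have := hh.1 (x - y) y; simpa [sub_add_cancel] using this
    have h2 : h y ≤ h (y - x) + h x := by
      have := hh.1 (y - x) x; simpa [sub_add_cancel] using this
    have e1 := hC (x - y)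
    have e2 := hC (y - x)
    rw [norm_sub_rev] at e2
    rw [abs_sub_le_iff]
    constructor <;> linarith
  have : LipschitzWith ⟨C, hC0⟩ h := by
    apply LipschitzWith.of_dist_le_mul
    intro x y
    show dist (h x) (h y) ≤ C * dist x y
    simpa [Real.dist_eq, dist_eq_norm] using key x y
  exact this.continuous

lemma IsNorm.exists_pos_lower (hm : 0 < m) (hh : IsNorm h) :
    ∃ c : ℝ, 0 < c ∧ ∀ x, c * ‖x‖ ≤ h x := by
  haveI : Nonempty (Fin m) := ⟨⟨0, hm⟩⟩
  obtain ⟨x0, hx0⟩ := exists_norm_eq (Fin m → ℝ) (zero_le_one : (0:ℝ) ≤ 1)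
  have hne : (Metric.sphere (0 : Fin m → ℝ) 1).Nonempty :=
    ⟨x0, by simp [mem_sphere_iff_norm, hx0]⟩
  obtain ⟨z, hz, hmin⟩ := (isCompact_sphere (0 : Fin m → ℝ) 1).exists_isMinOn hne
    hh.continuous.continuousOn
  have hz1 : ‖z‖ = 1 := by simpa [mem_sphere_iff_norm] using hz
  have hzpos : 0 < h z := by
    rcases (hh.nonneg z).lt_or_eq with hp | hp
    · exact hp
    · exfalso
      have hz0 : z = 0 := hh.2.2 z hp.symm
      rw [hz0] at hz1; simp at hz1
  refine ⟨h z, hzpos, fun x => ?_⟩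
  rcases eq_or_ne x 0 with rfl | hx
  · simp [hh.zero]
  · have hnx : (0:ℝ) < ‖x‖ := norm_pos_iff.mpr hx
    have hmem : ‖x‖⁻¹ • x ∈ Metric.sphere (0 : Fin m → ℝ) 1 := by
      simp [mem_sphere_iff_norm, norm_smul, abs_of_pos (inv_pos.mpr hnx),
        inv_mul_cancel₀ hnx.ne']
    have hle : h z ≤ h (‖x‖⁻¹ • x) := hmin hmem
    rw [hh.2.1, abs_of_pos (inv_pos.mpr hnx)] at hle
    have := mul_le_mul_of_nonneg_left hle hnx.le
    rw [mul_comm (h z)]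
    calc ‖x‖ * h z ≤ ‖x‖ * (‖x‖⁻¹ * h x) := this
      _ = h x := by field_simp

end aux

lemma key_ineq {m n : ℕ} (hm : 0 < m) {h : (Fin m → ℝ) → ℝ} (hh : IsNorm h)
    (M : Fin m → Fin n → ℝ) (hM : ∀ u : Euc n, dualNorm h (matVec M u) ≤ ‖u‖)
    (θ : Fin m → ℝ) (u : Euc n) :
    ∑ i, θ i * matVec M u i ≤ h θ * ‖u‖ := by
  obtain ⟨c, hc, hlow⟩ := hh.exists_pos_lower hm
  rcases eq_or_lt_of_le (hh.nonneg θ) with h0 | h0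
  · have hθ0 : θ = 0 := hh.2.2 θ h0.symm
    subst hθ0; simp [← h0]
  · have hbdd : BddAbove {r | ∃ θ' : Fin m → ℝ, h θ' ≤ 1 ∧ r = ∑ i, matVec M u i * θ' i} := by
      refine ⟨(∑ i, |matVec M u i|) * c⁻¹, ?_⟩
      rintro r ⟨θ', hθ', rfl⟩
      have hbound : ∀ i, |θ' i| ≤ c⁻¹ := by
        intro i
        have h1 : c * ‖θ'‖ ≤ 1 := le_trans (hlow θ') hθ'
        have h2 : |θ' i| ≤ ‖θ'‖ := by simpa using norm_le_pi_norm θ' i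
        have h3 : ‖θ'‖ ≤ c⁻¹ := by
          have hcc : c * c⁻¹ = 1 := mul_inv_cancel₀ hc.ne'
          nlinarith [norm_nonneg θ']
        linarith
      calc ∑ i, matVec M u i * θ' i ≤ ∑ i, |matVec M u i| * c⁻¹ := by
            refine Finset.sum_le_sum fun i _ => ?_
            calc matVec M u i * θ' i ≤ |matVec M u i * θ' i| := le_abs_self _
              _ = |matVec M u i| * |θ' i| := abs_mul _ _
              _ ≤ |matVec M u i| * c⁻¹ :=
                  mul_le_mul_of_nonneg_left (hbound i) (abs_nonneg _)
        _ = (∑ i, |matVec M u i|) * c⁻¹ := (Finset.sum_mul _ _ _).symm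
    set a := h θ with ha
    have hmemval : h ((a⁻¹) • θ) ≤ 1 := by
      rw [hh.2.1, abs_of_pos (inv_pos.mpr h0)]
      exact le_of_eq (inv_mul_cancel₀ h0.ne')
    have hmem : (∑ i, matVec M u i * ((a⁻¹) • θ) i) ∈
        {r | ∃ θ' : Fin m → ℝ, h θ' ≤ 1 ∧ r = ∑ i, matVec M u i * θ' i} :=
      ⟨(a⁻¹) • θ, hmemval, rfl⟩
    have hle : (∑ i, matVec M u i * ((a⁻¹) • θ) i) ≤ dualNorm h (matVec M u) :=
      le_csSup hbdd hmem
    have hfin := le_trans hle (hM u)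
    have heq : (∑ i, matVec M u i * ((a⁻¹) • θ) i) = a⁻¹ * ∑ i, θ i * matVec M u i := by
      rw [Finset.mul_sum]
      exact Finset.sum_congr rfl fun i _ => by simp [Pi.smul_apply]; ring
    rw [heq] at hfin
    have := mul_le_mul_of_nonneg_left hfin h0.le
    calc ∑ i, θ i * matVec M u i = a * (a⁻¹ * ∑ i, θ i * matVec M u i) := by
          field_simp
      _ ≤ a * ‖u‖ := this


/-- if `M ∈ ∂H(0)` (i.e. `h_*(Mu) ≤ |u|` for all `u`), `e` is a unit
vector and `θ · (Me) = h(θ)`, then `Mᵀ θ = h(θ) e`. -/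
theorem statement10 {m n : ℕ} (hm : 0 < m) (hn : 0 < n)
    (h : (Fin m → ℝ) → ℝ) (hh : IsNorm h)
    (M : Fin m → Fin n → ℝ) (hM : ∀ u : Euc n, dualNorm h (matVec M u) ≤ ‖u‖)
    (θ : Fin m → ℝ) (e : Euc n) (he : ‖e‖ = 1)
    (hext : ∑ i, θ i * matVec M e i = h θ) :
    ∀ j, ∑ i, M i j * θ i = h θ * e j := by
  set a := h θ with ha
  set v : Euc n := WithLp.toLp 2 (fun j => ∑ i, M i j * θ i : Fin n → ℝ) with hv
  have hswap : ∀ u : Euc n, ∑ i, θ i * matVec M u i = ∑ j, v j * u j := by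
    intro u
    simp only [matVec, Finset.mul_sum, hv]
    rw [Finset.sum_comm]
    refine Finset.sum_congr rfl fun j _ => ?_
    rw [Finset.sum_mul]
    exact Finset.sum_congr rfl fun i _ => by ring
  have hkey : ∀ u : Euc n, ∑ j, v j * u j ≤ a * ‖u‖ := by
    intro u
    rw [← hswap u]
    exact key_ineq hm hh M hM θ u
  have ha0 : 0 ≤ a := hh.nonneg θ
  have hve : ∑ j, v j * e j = a := by rw [← hswap e]; exact hext
  -- ∑ v j ^2 ≤ a^2
  have hnv : ‖v‖ = Real.sqrt (∑ j, (v j)^2) := by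
    rw [EuclideanSpace.norm_eq]
    congr 1
    exact Finset.sum_congr rfl fun j _ => by rw [Real.norm_eq_abs, sq_abs]
  have hs0 : 0 ≤ ∑ j, (v j)^2 := Finset.sum_nonneg fun j _ => sq_nonneg _
  have hvv : ∑ j, (v j)^2 ≤ a * Real.sqrt (∑ j, (v j)^2) := by
    have := hkey v
    rw [hnv] at this
    simpa [sq] using this
  have hs : ∑ j, (v j)^2 ≤ a^2 := by
    nlinarith [Real.sq_sqrt hs0, Real.sqrt_nonneg (∑ j, (v j)^2)]
  have hee : ∑ j, (e j)^2 = 1 := by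
    have := EuclideanSpace.norm_eq e
    rw [he] at this
    have h2 : Real.sqrt (∑ j, ‖e j‖^2) = 1 := this.symm
    have h3 : ∑ j, ‖e j‖^2 = 1 := by
      have hpos : (0:ℝ) ≤ ∑ j, ‖e j‖^2 :=
        Finset.sum_nonneg fun j _ => sq_nonneg ‖e j‖
      have h4 := Real.sq_sqrt hpos
      rw [h2] at h4; simpa using h4.symm
    rw [← h3]
    exact Finset.sum_congr rfl fun j _ => by rw [Real.norm_eq_abs, sq_abs]
  have hzero : ∑ j, (v j - a * e j)^2 = 0 := by
    have hexpand : ∑ j, (v j - a * e j)^2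
        = (∑ j, (v j)^2) - 2 * a * (∑ j, v j * e j) + a^2 * (∑ j, (e j)^2) := by
      rw [Finset.mul_sum, Finset.mul_sum, ← Finset.sum_sub_distrib, ← Finset.sum_add_distrib]
      exact Finset.sum_congr rfl fun j _ => by ring
    have hle : ∑ j, (v j - a * e j)^2 ≤ 0 := by
      rw [hexpand, hve, hee]; nlinarith
    have hge : 0 ≤ ∑ j, (v j - a * e j)^2 := Finset.sum_nonneg fun j _ => sq_nonneg _
    linarith
  intro j
  have := (Finset.sum_eq_zero_iff_of_nonneg (fun j _ => sq_nonneg (v j - a * e j))).mp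
    hzero j (Finset.mem_univ j)
  have hdiff : v j - a * e j = 0 := by
    exact pow_eq_zero_iff (by norm_num) |>.mp this
  have : v j = a * e j := by linarith
  simpa [hv] using this
end
end
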